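/- arXiv:2310.19862 — 6 statements merged into one kernel-verified Lean document; each statement's English description precedes it below -/
import Mathlib

section
/- Let (a_k)_{k≥0} be a sequence of nonnegative integers with a_0 > 0 and a_k > 0 for at least one k > 0, and let ζ(z) = Σ_{k=0}^∞ a_k z^k have radius of convergence R ∈ (0, ∞]. Then the function Z(z) = z·ζ'(z)/ζ(z) is strictly increasing on the real interval (0, R). -/
open Filter Topology Set

private lemma btwn {R : ENNReal} {x : ℝ} (h : ENNReal.ofReal x < R) :
    ∃ t : ℝ, x < t ∧ ENNReal.ofReal t < R := by
  obtain ⟨t, _ht0, h1, h2⟩ := ENNReal.lt_iff_exists_real_btwn.1 h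
  refine ⟨t, ?_, h2⟩
  by_contra hle
  exact absurd h1 (not_lt.2 (ENNReal.ofReal_le_ofReal (not_lt.1 hle)))

private lemma summable_k (a : ℕ → ℕ) {x t : ℝ} (hx : 0 ≤ x) (hxt : x < t)
    (ht : Summable (fun k : ℕ => (a k : ℝ) * t ^ k)) :
    Summable (fun k : ℕ => (k : ℝ) * (a k : ℝ) * x ^ k) := by
  have ht0 : 0 < t := lt_of_le_of_lt hx hxt
  set q := x / t with hq
  have hq0 : 0 ≤ q := div_nonneg hx ht0.le
  have hq1 : q < 1 := (div_lt_one ht0).2 hxt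
  set M := ∑' k : ℕ, (a k : ℝ) * t ^ k with hM
  have hMk : ∀ k, (a k : ℝ) * t ^ k ≤ M := fun k =>
    Summable.le_tsum ht k (fun j _ => mul_nonneg (Nat.cast_nonneg _) (pow_nonneg ht0.le _))
  have hsum : Summable (fun k : ℕ => M * ((k : ℝ) * q ^ k)) := by
    have h := summable_pow_mul_geometric_of_norm_lt_one (R := ℝ) 1
      (by rwa [Real.norm_eq_abs, abs_of_nonneg hq0])
    simpa [pow_one] using h.mul_left M
  apply Summable.of_nonneg_of_le _ _ hsum
  · intro k; positivity
  · intro k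
    have hx' : x = q * t := by rw [hq, div_mul_cancel₀ _ ht0.ne']
    have heq : (k : ℝ) * (a k : ℝ) * x ^ k = ((a k : ℝ) * t ^ k) * ((k : ℝ) * q ^ k) := by
      rw [hx', mul_pow]; ring
    rw [heq]
    exact mul_le_mul_of_nonneg_right (hMk k) (by positivity)

private lemma zeta_deriv_eq (a : ℕ → ℕ) {R : ENNReal}
    (hconv : ∀ x : ℝ, 0 ≤ x → ENNReal.ofReal x < R →
      Summable (fun k : ℕ => (a k : ℝ) * x ^ k))
    {z : ℝ} (hz : 0 < z) (hzR : ENNReal.ofReal z < R) :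
    z * deriv (fun w : ℝ => ∑' k : ℕ, (a k : ℝ) * w ^ k) z
      = ∑' k : ℕ, (k : ℝ) * (a k : ℝ) * z ^ k := by
  obtain ⟨t, hzt, htR⟩ := btwn hzR
  obtain ⟨t', htt', ht'R⟩ := btwn htR
  have ht0 : 0 < t := hz.trans hzt
  have hsum_t' : Summable (fun k : ℕ => (a k : ℝ) * t' ^ k) :=
    hconv t' (le_of_lt (ht0.trans htt')) ht'R
  have hu : Summable (fun k : ℕ => ((k : ℝ) * (a k : ℝ) * t ^ k) / t) :=
    (summable_k a ht0.le htt' hsum_t').div_const t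
  have hderiv : HasDerivAt (fun w : ℝ => ∑' k : ℕ, (a k : ℝ) * w ^ k)
      (∑' k : ℕ, (a k : ℝ) * ((k : ℝ) * z ^ (k - 1))) z := by
    apply hasDerivAt_tsum_of_isPreconnected hu (isOpen_Ioo (a := -t) (b := t))
      (isPreconnected_Ioo) (fun k y _ => (hasDerivAt_pow k y).const_mul ((a k : ℝ)))
      ?_ (y₀ := z) ?_ ?_ ?_
    · intro k y hy
      have hyt : |y| < t := abs_lt.2 ⟨hy.1, hy.2⟩
      rw [Real.norm_eq_abs, abs_mul, abs_mul, Nat.abs_cast, Nat.abs_cast, abs_pow]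
      cases k with
      | zero => simp
      | succ n =>
        have h1 : |y| ^ (n + 1 - 1) ≤ t ^ (n + 1 - 1) :=
          pow_le_pow_left₀ (abs_nonneg y) hyt.le _
        have h2 : (a (n+1) : ℝ) * ((n+1 : ℕ) * |y| ^ (n + 1 - 1))
            ≤ (a (n+1) : ℝ) * ((n+1 : ℕ) * t ^ (n + 1 - 1)) := by
          apply mul_le_mul_of_nonneg_left _ (Nat.cast_nonneg _)
          exact mul_le_mul_of_nonneg_left h1 (Nat.cast_nonneg _)
        refine h2.trans (le_of_eq ?_)
        have : t ^ (n + 1) = t ^ (n + 1 - 1) * t := by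
          simp [pow_succ]
        rw [this]
        field_simp
    · exact ⟨by linarith, hzt⟩
    · exact hconv z hz.le hzR
    · exact ⟨by linarith, hzt⟩
  rw [hderiv.deriv, ← tsum_mul_left]
  apply tsum_congr
  intro k
  cases k with
  | zero => simp
  | succ n =>
    simp only [Nat.add_sub_cancel, pow_succ]
    push_cast
    ring

private lemma pow_aux {x y : ℝ} (hx : 0 ≤ x) (hxy : x ≤ y) {k j : ℕ} (h : k ≤ j) :
    x ^ j * y ^ k ≤ x ^ k * y ^ j := by
  obtain ⟨d, rfl⟩ := Nat.exists_eq_add_of_le h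
  have hy : 0 ≤ y := hx.trans hxy
  calc x ^ (k + d) * y ^ k = x ^ d * (x ^ k * y ^ k) := by rw [pow_add]; ring
    _ ≤ y ^ d * (x ^ k * y ^ k) := by
        exact mul_le_mul_of_nonneg_right (pow_le_pow_left₀ hx hxy d)
          (mul_nonneg (pow_nonneg hx k) (pow_nonneg hy k))
    _ = x ^ k * y ^ (k + d) := by rw [pow_add]; ring

private lemma key_ineq {x y : ℝ} (hx : 0 ≤ x) (hxy : x ≤ y) (c d : ℝ) (hc : 0 ≤ c)
    (hd : 0 ≤ d) (k j : ℕ) :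
    (k : ℝ) * (c * d * (x ^ k * y ^ j)) + (j : ℝ) * (c * d * (x ^ j * y ^ k)) ≤
    (j : ℝ) * (c * d * (x ^ k * y ^ j)) + (k : ℝ) * (c * d * (x ^ j * y ^ k)) := by
  have hcd : 0 ≤ c * d := mul_nonneg hc hd
  rcases le_total k j with h | h
  · have hpow : x ^ j * y ^ k ≤ x ^ k * y ^ j := pow_aux hx hxy h
    have hkj : (k : ℝ) ≤ (j : ℝ) := Nat.cast_le.2 h
    nlinarith [mul_nonneg (sub_nonneg.2 hkj)
      (sub_nonneg.2 (mul_le_mul_of_nonneg_left hpow hcd))]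
  · have hpow : x ^ k * y ^ j ≤ x ^ j * y ^ k := pow_aux hx hxy h
    have hkj : (j : ℝ) ≤ (k : ℝ) := Nat.cast_le.2 h
    nlinarith [mul_nonneg (sub_nonneg.2 hkj)
      (sub_nonneg.2 (mul_le_mul_of_nonneg_left hpow hcd))]

set_option maxHeartbeats 1000000 in
/-- For a power series ζ(z) = Σ aₖ zᵏ with nonnegative integer coefficients,
a₀ > 0, some aₖ > 0 with k > 0, and radius of convergence R ∈ (0, ∞], the function
Z(z) = z ζ'(z)/ζ(z) is strictly increasing on (0, R). -/
theorem typical_ee_Z_strictMono (a : ℕ → ℕ) (ha0 : 0 < a 0) (hk : ∃ k, 0 < k ∧ 0 < a k)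
    (R : ENNReal) (hR : 0 < R)
    (hconv : ∀ x : ℝ, 0 ≤ x → ENNReal.ofReal x < R →
      Summable (fun k : ℕ => (a k : ℝ) * x ^ k))
    (hdiv : ∀ x : ℝ, 0 ≤ x → R < ENNReal.ofReal x →
      ¬ Summable (fun k : ℕ => (a k : ℝ) * x ^ k)) :
    StrictMonoOn
      (fun z : ℝ => z * deriv (fun w : ℝ => ∑' k : ℕ, (a k : ℝ) * w ^ k) z /
        ∑' k : ℕ, (a k : ℝ) * z ^ k)
      {z : ℝ | 0 < z ∧ ENNReal.ofReal z < R} := by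
  obtain ⟨k₀, hk₀pos, hak₀⟩ := hk
  intro x hx y hy hxy
  obtain ⟨hx0, hxR⟩ := hx
  obtain ⟨hy0, hyR⟩ := hy
  -- summability facts
  have hfx : Summable (fun k : ℕ => (a k : ℝ) * x ^ k) := hconv x hx0.le hxR
  have hfy : Summable (fun k : ℕ => (a k : ℝ) * y ^ k) := hconv y hy0.le hyR
  have hgx : Summable (fun k : ℕ => (k : ℝ) * (a k : ℝ) * x ^ k) := by
    obtain ⟨t, h1, h2⟩ := btwn hxR
    exact summable_k a hx0.le h1 (hconv t (hx0.le.trans h1.le) h2)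
  have hgy : Summable (fun k : ℕ => (k : ℝ) * (a k : ℝ) * y ^ k) := by
    obtain ⟨t, h1, h2⟩ := btwn hyR
    exact summable_k a hy0.le h1 (hconv t (hy0.le.trans h1.le) h2)
  -- positivity of the denominators
  have hfxpos : 0 < ∑' k : ℕ, (a k : ℝ) * x ^ k := by
    have h0 : (0 : ℝ) < (a 0 : ℝ) * x ^ 0 := by
      simpa using (Nat.cast_pos (α := ℝ)).2 ha0
    exact lt_of_lt_of_le h0 (Summable.le_tsum hfx 0 fun j _ =>
      mul_nonneg (Nat.cast_nonneg _) (pow_nonneg hx0.le _))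
  have hfypos : 0 < ∑' k : ℕ, (a k : ℝ) * y ^ k := by
    have h0 : (0 : ℝ) < (a 0 : ℝ) * y ^ 0 := by
      simpa using (Nat.cast_pos (α := ℝ)).2 ha0
    exact lt_of_lt_of_le h0 (Summable.le_tsum hfy 0 fun j _ =>
      mul_nonneg (Nat.cast_nonneg _) (pow_nonneg hy0.le _))
  -- rewrite the numerators using termwise differentiation
  simp only
  rw [zeta_deriv_eq a hconv hx0 hxR, zeta_deriv_eq a hconv hy0 hyR,
    div_lt_div_iff₀ hfxpos hfypos]
  -- turn products of sums into double sums
  set L : ℕ × ℕ → ℝ :=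
    fun p => ((p.1 : ℝ) * (a p.1 : ℝ) * x ^ p.1) * ((a p.2 : ℝ) * y ^ p.2) with hLdef
  set Rr : ℕ × ℕ → ℝ :=
    fun p => ((a p.1 : ℝ) * x ^ p.1) * ((p.2 : ℝ) * (a p.2 : ℝ) * y ^ p.2) with hRdef
  have habs : ∀ (f : ℕ → ℝ), Summable f → Summable (fun k => ‖f k‖) := by
    intro f hf
    simpa only [Real.norm_eq_abs] using hf.abs
  have hprod1 : (∑' k : ℕ, (k : ℝ) * (a k : ℝ) * x ^ k) * (∑' k : ℕ, (a k : ℝ) * y ^ k)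
      = ∑' p : ℕ × ℕ, L p :=
    tsum_mul_tsum_of_summable_norm (habs _ hgx) (habs _ hfy)
  have hprod2 : (∑' k : ℕ, (a k : ℝ) * x ^ k) * (∑' k : ℕ, (k : ℝ) * (a k : ℝ) * y ^ k)
      = ∑' p : ℕ × ℕ, Rr p :=
    tsum_mul_tsum_of_summable_norm (habs _ hfx) (habs _ hgy)
  rw [mul_comm (∑' k : ℕ, (k : ℝ) * (a k : ℝ) * y ^ k), hprod1, hprod2]
  -- summability of the double sums and their swaps
  have hL : Summable L :=
    Summable.mul_of_nonneg hgx hfy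
      (fun k => mul_nonneg (mul_nonneg (Nat.cast_nonneg _) (Nat.cast_nonneg _))
        (pow_nonneg hx0.le _))
      (fun k => mul_nonneg (Nat.cast_nonneg _) (pow_nonneg hy0.le _))
  have hRs : Summable Rr :=
    Summable.mul_of_nonneg hfx hgy
      (fun k => mul_nonneg (Nat.cast_nonneg _) (pow_nonneg hx0.le _))
      (fun k => mul_nonneg (mul_nonneg (Nat.cast_nonneg _) (Nat.cast_nonneg _))
        (pow_nonneg hy0.le _))
  have hLswap : Summable (fun p : ℕ × ℕ => L p.swap) :=
    (Equiv.prodComm ℕ ℕ).summable_iff.2 hL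
  have hRswap : Summable (fun p : ℕ × ℕ => Rr p.swap) :=
    (Equiv.prodComm ℕ ℕ).summable_iff.2 hRs
  have hsumLswap : ∑' p : ℕ × ℕ, L p.swap = ∑' p : ℕ × ℕ, L p :=
    (Equiv.prodComm ℕ ℕ).tsum_eq L
  have hsumRswap : ∑' p : ℕ × ℕ, Rr p.swap = ∑' p : ℕ × ℕ, Rr p :=
    (Equiv.prodComm ℕ ℕ).tsum_eq Rr
  -- symmetrization
  have h1 : ∑' p : ℕ × ℕ, L p = ∑' p : ℕ × ℕ, (L p + L p.swap) / 2 := by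
    rw [tsum_div_const, Summable.tsum_add hL hLswap, hsumLswap]; ring
  have h2 : ∑' p : ℕ × ℕ, Rr p = ∑' p : ℕ × ℕ, (Rr p + Rr p.swap) / 2 := by
    rw [tsum_div_const, Summable.tsum_add hRs hRswap, hsumRswap]; ring
  rw [h1, h2]
  -- strict termwise comparison
  apply Summable.tsum_lt_tsum (i := (k₀, 0))
  · rintro ⟨k, j⟩
    have h := key_ineq hx0.le hxy.le ((a k : ℝ)) ((a j : ℝ))
      (Nat.cast_nonneg _) (Nat.cast_nonneg _) k j
    simp only [hLdef, hRdef, Prod.swap_prod_mk]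
    linarith [h]
  · have hxk : x ^ k₀ < y ^ k₀ := pow_lt_pow_left₀ hxy hx0.le (Nat.pos_iff_ne_zero.1 hk₀pos)
    have hc : (0 : ℝ) < (k₀ : ℝ) * (a k₀ : ℝ) * (a 0 : ℝ) :=
      mul_pos (mul_pos ((Nat.cast_pos (α := ℝ)).2 hk₀pos) ((Nat.cast_pos (α := ℝ)).2 hak₀))
        ((Nat.cast_pos (α := ℝ)).2 ha0)
    simp only [hLdef, hRdef, Prod.swap_prod_mk, Nat.cast_zero, pow_zero, zero_mul, mul_zero,
      mul_one, add_zero, zero_add]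
    nlinarith [mul_lt_mul_of_pos_left hxk hc]
  · exact (hL.add hLswap).div_const 2
  · exact (hRs.add hRswap).div_const 2
end

section
/- Let ζ(z) = Σ_{k=0}^{n_max} a_k z^k be a polynomial (n_max ≥ 1) with nonnegative integer coefficients, a_0 > 0 and a_{n_max} > 0. Then for every n ∈ (0, n_max) there exists a unique z_0 > 0 such that z_0·ζ'(z_0) = n·ζ(z_0). Moreover z_0 is a strictly increasing function of n. -/
open Filter Topology Set

/-- The polynomial generating function ζ(z) = Σ_{k=0}^{n_max} aₖ zᵏ. -/
noncomputable def polyZeta (a : ℕ → ℕ) (nmax : ℕ) (w : ℝ) : ℝ :=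
  ∑ k ∈ Finset.range (nmax + 1), (a k : ℝ) * w ^ k

noncomputable def polyNum (a : ℕ → ℕ) (nmax : ℕ) (w : ℝ) : ℝ :=
  ∑ k ∈ Finset.range (nmax + 1), (k : ℝ) * (a k : ℝ) * w ^ k

lemma polyZeta_pos (a : ℕ → ℕ) (nmax : ℕ) (ha0 : 0 < a 0) {z : ℝ} (hz : 0 ≤ z) :
    0 < polyZeta a nmax z := by
  apply Finset.sum_pos'
  · intro k _; positivity
  · exact ⟨0, Finset.mem_range.2 (Nat.succ_pos _), by simp; exact_mod_cast ha0⟩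

lemma mul_deriv_polyZeta (a : ℕ → ℕ) (nmax : ℕ) (z : ℝ) :
    z * deriv (polyZeta a nmax) z = polyNum a nmax z := by
  have hd : HasDerivAt (polyZeta a nmax)
      (∑ k ∈ Finset.range (nmax + 1), (a k : ℝ) * ((k : ℝ) * z ^ (k - 1))) z := by
    apply HasDerivAt.fun_sum
    intro k _
    exact (hasDerivAt_pow k z).const_mul _
  rw [hd.deriv, Finset.mul_sum]
  apply Finset.sum_congr rfl
  intro k _
  rcases k with _ | m
  · simp
  · rw [Nat.add_sub_cancel, pow_succ]; ring

lemma key_ineq_s4 (a : ℕ → ℕ) (nmax : ℕ) (hnmax : 1 ≤ nmax) (ha0 : 0 < a 0)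
    (hatop : 0 < a nmax) {x y : ℝ} (hx : 0 < x) (hxy : x < y) :
    polyNum a nmax x * polyZeta a nmax y < polyNum a nmax y * polyZeta a nmax x := by
  have hy : 0 < y := hx.trans hxy
  unfold polyNum polyZeta
  rw [Finset.sum_mul_sum, Finset.sum_mul_sum, ← sub_pos, ← Finset.sum_sub_distrib]
  simp_rw [← Finset.sum_sub_distrib]
  set f : ℕ → ℕ → ℝ := fun j k =>
    (j : ℝ) * (a j : ℝ) * y ^ j * ((a k : ℝ) * x ^ k) -
    (j : ℝ) * (a j : ℝ) * x ^ j * ((a k : ℝ) * y ^ k) with hf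
  show 0 < ∑ j ∈ Finset.range (nmax+1), ∑ k ∈ Finset.range (nmax+1), f j k
  have hswap : (∑ j ∈ Finset.range (nmax+1), ∑ k ∈ Finset.range (nmax+1), f j k)
      = ∑ j ∈ Finset.range (nmax+1), ∑ k ∈ Finset.range (nmax+1), f k j :=
    Finset.sum_comm
  -- pairwise nonneg
  have hnn : ∀ j ∈ Finset.range (nmax+1), ∀ k ∈ Finset.range (nmax+1),
      0 ≤ f j k + f k j := by
    intro j _ k _
    rcases le_total j k with h | h
    · obtain ⟨d, rfl⟩ := Nat.exists_eq_add_of_le h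
      have hp : y ^ j * x ^ (j + d) ≤ x ^ j * y ^ (j + d) := by
        rw [pow_add, pow_add]
        have h1 : x ^ d ≤ y ^ d := pow_le_pow_left₀ hx.le hxy.le d
        have h2 : (0:ℝ) < x ^ j := pow_pos hx j
        have h3 : (0:ℝ) < y ^ j := pow_pos hy j
        calc y ^ j * (x ^ j * x ^ d) = (x ^ j * y ^ j) * x ^ d := by ring
          _ ≤ (x ^ j * y ^ j) * y ^ d := by
              apply mul_le_mul_of_nonneg_left h1; positivity
          _ = x ^ j * (y ^ j * y ^ d) := by ring
      have hc : (j : ℝ) ≤ (j + d : ℕ) := by exact_mod_cast h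
      have key : 0 ≤ ((a j : ℝ) * (a (j+d) : ℝ)) *
          ((((j+d:ℕ) : ℝ) - (j:ℝ)) * (x ^ j * y ^ (j+d) - y ^ j * x ^ (j+d))) := by
        apply mul_nonneg (by positivity)
        apply mul_nonneg (by linarith) (by linarith)
      simp only [hf]
      push_cast at key ⊢
      nlinarith [key]
    · obtain ⟨d, rfl⟩ := Nat.exists_eq_add_of_le h
      have hp : y ^ k * x ^ (k + d) ≤ x ^ k * y ^ (k + d) := by
        rw [pow_add, pow_add]
        have h1 : x ^ d ≤ y ^ d := pow_le_pow_left₀ hx.le hxy.le d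
        calc y ^ k * (x ^ k * x ^ d) = (x ^ k * y ^ k) * x ^ d := by ring
          _ ≤ (x ^ k * y ^ k) * y ^ d := by
              apply mul_le_mul_of_nonneg_left h1; positivity
          _ = x ^ k * (y ^ k * y ^ d) := by ring
      have hc : (k : ℝ) ≤ (k + d : ℕ) := by exact_mod_cast h
      have key : 0 ≤ ((a k : ℝ) * (a (k+d) : ℝ)) *
          ((((k+d:ℕ) : ℝ) - (k:ℝ)) * (x ^ k * y ^ (k+d) - y ^ k * x ^ (k+d))) := by
        apply mul_nonneg (by positivity)
        apply mul_nonneg (by linarith) (by linarith)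
      simp only [hf]
      push_cast at key ⊢
      nlinarith [key]
  -- a strictly positive pair : (nmax, 0)
  have hpos : 0 < f nmax 0 + f 0 nmax := by
    have hpow : x ^ nmax < y ^ nmax := by
      apply pow_lt_pow_left₀ hxy hx.le
      omega
    have ha0' : (0:ℝ) < a 0 := by exact_mod_cast ha0
    have hat' : (0:ℝ) < a nmax := by exact_mod_cast hatop
    have hn' : (0:ℝ) < nmax := by exact_mod_cast hnmax
    simp only [hf]
    push_cast
    nlinarith [mul_pos (mul_pos hn' hat') (mul_pos ha0' (sub_pos.2 hpow))]
  -- conclude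
  have hsum2 : 0 < ∑ j ∈ Finset.range (nmax+1), ∑ k ∈ Finset.range (nmax+1),
      (f j k + f k j) := by
    apply Finset.sum_pos'
    · intro j hj
      exact Finset.sum_nonneg fun k hk => hnn j hj k hk
    · refine ⟨nmax, Finset.mem_range.2 (Nat.lt_succ_self _), ?_⟩
      apply Finset.sum_pos'
      · intro k hk
        exact hnn nmax (Finset.mem_range.2 (Nat.lt_succ_self _)) k hk
      · exact ⟨0, Finset.mem_range.2 (Nat.succ_pos _), hpos⟩
  have := hsum2
  simp_rw [Finset.sum_add_distrib] at this
  rw [← hswap] at this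
  linarith

lemma cont_polyZeta (a : ℕ → ℕ) (nmax : ℕ) : Continuous (polyZeta a nmax) := by
  unfold polyZeta
  exact continuous_finset_sum _ fun k _ => continuous_const.mul (continuous_pow k)

lemma cont_polyNum (a : ℕ → ℕ) (nmax : ℕ) : Continuous (polyNum a nmax) := by
  unfold polyNum
  exact continuous_finset_sum _ fun k _ => continuous_const.mul (continuous_pow k)

lemma polyNum_zero (a : ℕ → ℕ) (nmax : ℕ) : polyNum a nmax 0 = 0 := by
  unfold polyNum
  apply Finset.sum_eq_zero
  intro k _
  rcases k with _ | m <;> simp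

-- large z bound: polyNum z > n * polyZeta z for suitable z
lemma exists_large (a : ℕ → ℕ) (nmax : ℕ) (hnmax : 1 ≤ nmax) (hatop : 0 < a nmax)
    {n : ℝ} (hn : 0 < n) (hn2 : n < nmax) :
    ∃ y : ℝ, 0 < y ∧ n * polyZeta a nmax y < polyNum a nmax y := by
  set B : ℝ := ∑ k ∈ Finset.range nmax, (a k : ℝ) with hB
  have hBnn : 0 ≤ B := Finset.sum_nonneg fun k _ => by positivity
  have hat : (0:ℝ) < a nmax := by exact_mod_cast hatop
  set y : ℝ := max 1 (n * B / ((nmax - n) * a nmax) + 1) with hy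
  have hy1 : (1:ℝ) ≤ y := le_max_left _ _
  have hy0 : (0:ℝ) < y := lt_of_lt_of_le one_pos hy1
  refine ⟨y, hy0, ?_⟩
  have hylarge : n * B < (nmax - n) * (a nmax) * y := by
    have h1 : n * B / ((nmax - n) * a nmax) + 1 ≤ y := le_max_right _ _
    have hden : (0:ℝ) < (nmax - n) * a nmax := by
      apply mul_pos (by linarith) hat
    rw [← div_lt_iff₀' hden] at *
    calc n * B / ((↑nmax - n) * ↑(a nmax)) < n * B / ((↑nmax - n) * ↑(a nmax)) + 1 := by linarith
      _ ≤ y := h1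
  -- bound: polyZeta y ≤ B * y^(nmax - 1) + a nmax * y ^ nmax
  have hzeta : polyZeta a nmax y ≤ B * y ^ (nmax - 1) + (a nmax : ℝ) * y ^ nmax := by
    unfold polyZeta
    rw [Finset.sum_range_succ]
    have : ∑ k ∈ Finset.range nmax, (a k : ℝ) * y ^ k ≤ B * y ^ (nmax - 1) := by
      rw [hB, Finset.sum_mul]
      apply Finset.sum_le_sum
      intro k hk
      have hk' : k ≤ nmax - 1 := by
        have := Finset.mem_range.1 hk; omega
      have : y ^ k ≤ y ^ (nmax - 1) := pow_le_pow_right₀ hy1 hk'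
      nlinarith [show (0:ℝ) ≤ (a k : ℝ) by positivity]
    linarith
  -- bound: polyNum y ≥ nmax * a nmax * y ^ nmax
  have hnum : (nmax : ℝ) * (a nmax : ℝ) * y ^ nmax ≤ polyNum a nmax y := by
    unfold polyNum
    apply Finset.single_le_sum (f := fun k : ℕ => (k : ℝ) * (a k : ℝ) * y ^ k)
    · intro k _; positivity
    · exact Finset.mem_range.2 (Nat.lt_succ_self _)
  -- combine
  have hys : y ^ nmax = y ^ (nmax - 1) * y := by
    rw [← pow_succ]
    congr 1
    omega
  have hp : (0:ℝ) < y ^ (nmax - 1) := pow_pos hy0 _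
  have : n * (B * y ^ (nmax - 1) + (a nmax : ℝ) * y ^ nmax) <
      (nmax : ℝ) * (a nmax : ℝ) * y ^ nmax := by
    rw [hys]
    nlinarith [hylarge, hp]
  nlinarith [hzeta, hnum, hn]

/-- For a polynomial ζ with nonnegative integer coefficients, a₀ > 0,
a_{n_max} > 0, n_max ≥ 1: for every n ∈ (0, n_max) there is a unique z₀ > 0 with
z₀ ζ'(z₀) = n ζ(z₀), and z₀ is strictly increasing as a function of n. -/
theorem typical_ee_saddle_exists_unique_mono (nmax : ℕ) (hnmax : 1 ≤ nmax) (a : ℕ → ℕ)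
    (ha0 : 0 < a 0) (hatop : 0 < a nmax) :
    (∀ n : ℝ, n ∈ Set.Ioo (0 : ℝ) (nmax : ℝ) →
      ∃! z0 : ℝ, 0 < z0 ∧ z0 * deriv (polyZeta a nmax) z0 = n * polyZeta a nmax z0) ∧
    (∀ n₁ n₂ z₁ z₂ : ℝ, n₁ ∈ Set.Ioo (0 : ℝ) (nmax : ℝ) → n₂ ∈ Set.Ioo (0 : ℝ) (nmax : ℝ) →
      n₁ < n₂ →
      0 < z₁ → z₁ * deriv (polyZeta a nmax) z₁ = n₁ * polyZeta a nmax z₁ →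
      0 < z₂ → z₂ * deriv (polyZeta a nmax) z₂ = n₂ * polyZeta a nmax z₂ →
      z₁ < z₂) := by
  -- strict monotonicity of n as a function of z along solutions
  have mono : ∀ m₁ m₂ w₁ w₂ : ℝ, 0 < w₁ → w₁ < w₂ →
      polyNum a nmax w₁ = m₁ * polyZeta a nmax w₁ →
      polyNum a nmax w₂ = m₂ * polyZeta a nmax w₂ → m₁ < m₂ := by
    intro m₁ m₂ w₁ w₂ hw1 hw12 he1 he2
    have hk := key_ineq_s4 a nmax hnmax ha0 hatop hw1 hw12
    rw [he1, he2] at hk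
    have hz1 : 0 < polyZeta a nmax w₁ := polyZeta_pos a nmax ha0 hw1.le
    have hz2 : 0 < polyZeta a nmax w₂ := polyZeta_pos a nmax ha0 (hw1.trans hw12).le
    have hk' : m₁ * (polyZeta a nmax w₁ * polyZeta a nmax w₂) <
        m₂ * (polyZeta a nmax w₁ * polyZeta a nmax w₂) := by ring_nf; ring_nf at hk; linarith
    exact lt_of_mul_lt_mul_right hk' (by positivity)
  constructor
  · rintro n ⟨hn0, hn1⟩
    obtain ⟨y, hy0, hy⟩ := exists_large a nmax hnmax hatop hn0 hn1
    -- IVT for g z = polyNum z - n * polyZeta z on [0, y]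
    set g : ℝ → ℝ := fun z => polyNum a nmax z - n * polyZeta a nmax z with hg
    have hcont : ContinuousOn g (Set.Icc 0 y) :=
      ((cont_polyNum a nmax).sub ((continuous_const.mul (cont_polyZeta a nmax)))).continuousOn
    have hg0 : g 0 < 0 := by
      have := polyZeta_pos a nmax ha0 (le_refl (0:ℝ))
      simp only [hg, polyNum_zero]
      nlinarith
    have hgy : 0 < g y := by simp only [hg]; linarith
    have := intermediate_value_Ioo hy0.le hcont
    obtain ⟨z0, hz0mem, hz0⟩ := this ⟨hg0, hgy⟩
    refine ⟨z0, ⟨hz0mem.1, ?_⟩, ?_⟩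
    · rw [mul_deriv_polyZeta]
      simp only [hg] at hz0
      linarith
    · rintro z' ⟨hz'0, hz'e⟩
      rw [mul_deriv_polyZeta] at hz'e
      have hz0e : polyNum a nmax z0 = n * polyZeta a nmax z0 := by
        simp only [hg] at hz0; linarith
      rcases lt_trichotomy z' z0 with h | h | h
      · exact absurd (mono n n z' z0 hz'0 h hz'e hz0e) (lt_irrefl n)
      · exact h
      · exact absurd (mono n n z0 z' hz0mem.1 h hz0e hz'e) (lt_irrefl n)
  · rintro n₁ n₂ z₁ z₂ _ _ h12 hz1 he1 hz2 he2
    rw [mul_deriv_polyZeta] at he1 he2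
    rcases lt_trichotomy z₁ z₂ with h | h | h
    · exact h
    · subst h; rw [he1] at he2
      have := polyZeta_pos a nmax ha0 hz1.le
      nlinarith
    · exact absurd (mono n₂ n₁ z₂ z₁ hz2 h he2 he1) (not_lt.2 h12.le)
end

section
/- Let ζ be a power series with nonnegative coefficients, a_0 > 0 and at least one a_k > 0 with k > 0. Then for any z in (0,R), the expression [ζ'(z) + z ζ''(z)]·ζ(z) − z·ζ'(z)² equals Σ_{k=0}^∞ ( (k+1)² a_{k+1} a_0 + Σ_{l=1}^{⌊k/2⌋} (2l−1−k)² a_l a_{k−l+1} ) z^k, and in particular is strictly positive. -/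
open Filter Topology Set

private lemma sum_geom_aux {q : ℝ} (h0 : 0 ≤ q) (h1 : q < 1) :
    Summable fun k : ℕ => ((k : ℝ) + 1) * q ^ k := by
  have h := summable_pow_mul_geometric_of_norm_lt_one (R := ℝ) 1
    (r := q) (by rwa [Real.norm_eq_abs, abs_of_nonneg h0])
  have h2 := h.add (summable_geometric_of_lt_one h0 h1)
  refine h2.congr fun n => ?_
  ring

private lemma summable_coeff' (c : ℕ → ℝ) {w w' : ℝ} (h0 : 0 ≤ w') (hlt : w' < w)
    (hs : Summable fun k : ℕ => |c k| * w ^ k) :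
    Summable fun k : ℕ => ((k : ℝ) + 1) * |c k| * w' ^ k := by
  have hw : 0 < w := lt_of_le_of_lt h0 hlt
  set C := ∑' k : ℕ, |c k| * w ^ k with hC
  have hCk : ∀ k, |c k| * w ^ k ≤ C := fun k =>
    Summable.le_tsum hs k fun j _ => by positivity
  have hq0 : 0 ≤ w' / w := div_nonneg h0 hw.le
  have hq1 : w' / w < 1 := (div_lt_one hw).2 hlt
  refine Summable.of_nonneg_of_le (fun k => by positivity) (fun k => ?_)
    (((sum_geom_aux hq0 hq1)).mul_left C)
  have h1 : |c k| * w' ^ k ≤ C * (w' / w) ^ k := by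
    have he : |c k| * w' ^ k = (|c k| * w ^ k) * (w' / w) ^ k := by
      rw [div_pow]
      field_simp
    rw [he, div_pow]
    exact mul_le_mul_of_nonneg_right (hCk k) (by positivity)
  have h2 : ((k : ℝ) + 1) * (|c k| * w' ^ k) ≤ ((k : ℝ) + 1) * (C * (w' / w) ^ k) :=
    mul_le_mul_of_nonneg_left h1 (by positivity)
  calc ((k : ℝ) + 1) * |c k| * w' ^ k = ((k : ℝ) + 1) * (|c k| * w' ^ k) := by ring
    _ ≤ ((k : ℝ) + 1) * (C * (w' / w) ^ k) := h2
    _ = C * (((k : ℝ) + 1) * (w' / w) ^ k) := by ring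

private lemma summable_coeff (c : ℕ → ℝ) {w w' : ℝ} (h0 : 0 ≤ w') (hlt : w' < w)
    (hs : Summable fun k : ℕ => |c k| * w ^ k) :
    Summable fun k : ℕ => ((k : ℝ) + 1) * |c (k + 1)| * w' ^ k := by
  have hw : 0 < w := lt_of_le_of_lt h0 hlt
  set C := ∑' k : ℕ, |c k| * w ^ k with hC
  have hCk : ∀ k, |c k| * w ^ k ≤ C := fun k =>
    Summable.le_tsum hs k fun j _ => by positivity
  have hq0 : 0 ≤ w' / w := div_nonneg h0 hw.le
  have hq1 : w' / w < 1 := (div_lt_one hw).2 hlt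
  refine Summable.of_nonneg_of_le (fun k => by positivity) (fun k => ?_)
    (((sum_geom_aux hq0 hq1)).mul_left (C / w))
  have h1 : |c (k + 1)| * w' ^ k ≤ (C / w) * (w' / w) ^ k := by
    have he : |c (k + 1)| * w' ^ k = (|c (k + 1)| * w ^ (k + 1)) * ((w' / w) ^ k / w) := by
      rw [div_pow]
      field_simp
      ring
    rw [he]
    have h3 : (|c (k + 1)| * w ^ (k + 1)) * ((w' / w) ^ k / w)
        ≤ C * ((w' / w) ^ k / w) :=
      mul_le_mul_of_nonneg_right (hCk (k + 1)) (by positivity)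
    calc (|c (k + 1)| * w ^ (k + 1)) * ((w' / w) ^ k / w) ≤ C * ((w' / w) ^ k / w) := h3
      _ = (C / w) * (w' / w) ^ k := by ring
  have h2 : ((k : ℝ) + 1) * (|c (k + 1)| * w' ^ k)
      ≤ ((k : ℝ) + 1) * ((C / w) * (w' / w) ^ k) :=
    mul_le_mul_of_nonneg_left h1 (by positivity)
  calc ((k : ℝ) + 1) * |c (k + 1)| * w' ^ k
      = ((k : ℝ) + 1) * (|c (k + 1)| * w' ^ k) := by ring
    _ ≤ ((k : ℝ) + 1) * ((C / w) * (w' / w) ^ k) := h2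
    _ = (C / w) * (((k : ℝ) + 1) * (w' / w) ^ k) := by ring

private lemma summable_norm_of_abs_le (c : ℕ → ℝ) {w y : ℝ} (hy : |y| ≤ w)
    (hs : Summable fun k : ℕ => |c k| * w ^ k) :
    Summable fun k : ℕ => ‖c k * y ^ k‖ := by
  refine Summable.of_nonneg_of_le (fun k => norm_nonneg _) (fun k => ?_) hs
  rw [Real.norm_eq_abs, abs_mul, abs_pow]
  exact mul_le_mul_of_nonneg_left (pow_le_pow_left₀ (abs_nonneg y) hy k) (abs_nonneg _)

private lemma summable_of_abs_le (c : ℕ → ℝ) {w y : ℝ} (hy : |y| ≤ w)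
    (hs : Summable fun k : ℕ => |c k| * w ^ k) :
    Summable fun k : ℕ => c k * y ^ k :=
  (summable_norm_of_abs_le c hy hs).of_norm

private lemma hasDerivAt_psum (c : ℕ → ℝ) {w z : ℝ}
    (hs : Summable fun k : ℕ => |c k| * w ^ k) (hz : |z| < w) :
    HasDerivAt (fun y => ∑' k : ℕ, c k * y ^ k)
      (∑' k : ℕ, (((k : ℝ) + 1) * c (k + 1)) * z ^ k) z := by
  have hw : 0 < w := lt_of_le_of_lt (abs_nonneg z) hz
  set w' : ℝ := (|z| + w) / 2 with hw'
  have h1 : |z| < w' := by rw [hw']; linarith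
  have h2 : w' < w := by rw [hw']; linarith
  have h3 : 0 < w' := lt_of_le_of_lt (abs_nonneg z) h1
  set u : ℕ → ℝ := fun n => (n : ℝ) * |c n| * w' ^ (n - 1) with hu_def
  have hu : Summable u := by
    rw [← summable_nat_add_iff 1]
    refine (summable_coeff c h3.le h2 hs).congr fun k => ?_
    simp only [hu_def]
    push_cast
    ring_nf
  have hbound : ∀ (n : ℕ) (y : ℝ), y ∈ Ioo (-w') w' →
      ‖c n * ((n : ℝ) * y ^ (n - 1))‖ ≤ u n := by
    intro n y hy
    have hyw : |y| ≤ w' := le_of_lt (abs_lt.2 ⟨hy.1, hy.2⟩)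
    rw [Real.norm_eq_abs, abs_mul, abs_mul, abs_pow, Nat.abs_cast, hu_def]
    calc |c n| * ((n : ℝ) * |y| ^ (n - 1)) ≤ |c n| * ((n : ℝ) * w' ^ (n - 1)) := by
          refine mul_le_mul_of_nonneg_left ?_ (abs_nonneg _)
          exact mul_le_mul_of_nonneg_left
            (pow_le_pow_left₀ (abs_nonneg y) hyw _) (Nat.cast_nonneg n)
      _ = (n : ℝ) * |c n| * w' ^ (n - 1) := by ring
  have key := hasDerivAt_tsum_of_isPreconnected hu (isOpen_Ioo (a := -w') (b := w'))
    (convex_Ioo _ _).isPreconnected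
    (g := fun n y => c n * y ^ n) (g' := fun n y => c n * ((n : ℝ) * y ^ (n - 1)))
    (fun n y _ => (hasDerivAt_pow n y).const_mul (c n))
    hbound (y₀ := 0) (by constructor <;> [linarith; exact h3])
    (by
      refine summable_of_ne_finset_zero (s := {0}) fun n hn => ?_
      simp only [Finset.mem_singleton] at hn
      show c n * (0 : ℝ) ^ n = 0
      rw [zero_pow hn, mul_zero])
    (abs_lt.1 h1 |>.imp (fun h => h) (fun h => h) |> fun h => Set.mem_Ioo.2 h)
  have hsum : Summable fun n : ℕ => c n * ((n : ℝ) * z ^ (n - 1)) :=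
    Summable.of_norm_bounded hu fun n => hbound n z (Set.mem_Ioo.2 (abs_lt.1 h1))
  have heq : ∑' n : ℕ, c n * ((n : ℝ) * z ^ (n - 1))
      = ∑' k : ℕ, (((k : ℝ) + 1) * c (k + 1)) * z ^ k := by
    rw [Summable.tsum_eq_zero_add hsum]
    simp only [Nat.cast_zero, zero_mul, mul_zero, zero_add]
    refine tsum_congr fun k => ?_
    push_cast
    ring_nf
  rw [← heq]
  exact key

private lemma pair_sum (n : ℕ) (A : ℕ → ℝ)
    (hA : ∀ m, 1 ≤ m → m ≤ n → A (n + 1 - m) = A m) :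
    ∑ m ∈ Finset.Icc 1 n, (m : ℝ) * (2 * m - n - 1) * A m
      = ∑ l ∈ Finset.Icc 1 (n / 2), (2 * (l : ℝ) - n - 1) ^ 2 * A l := by
  set f : ℕ → ℝ := fun m => (m : ℝ) * (2 * m - n - 1) * A m with hf
  have hIoc : ∀ b : ℕ, Finset.Icc 1 b = Finset.Ioc 0 b := fun b => by
    ext x; simp [Nat.lt_iff_add_one_le]
  rw [hIoc n, hIoc (n / 2)]
  rw [← Finset.sum_Ioc_consecutive _ (Nat.zero_le (n / 2)) (Nat.div_le_self n 2)]
  have h2 : ∑ m ∈ Finset.Ioc (n / 2) n, f m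
      = ∑ l ∈ Finset.Ioc 0 (n - n / 2), f (n + 1 - l) := by
    refine Finset.sum_nbij' (fun m => n + 1 - m) (fun l => n + 1 - l) ?_ ?_ ?_ ?_ ?_
    · intro m hm; simp only [Finset.mem_Ioc] at hm ⊢; omega
    · intro l hl; simp only [Finset.mem_Ioc] at hl ⊢; omega
    · intro m hm; simp only [Finset.mem_Ioc] at hm; omega
    · intro l hl; simp only [Finset.mem_Ioc] at hl; omega
    · intro m hm; simp only [Finset.mem_Ioc] at hm
      congr 1; omega
  rw [h2]
  have h3 : ∑ l ∈ Finset.Ioc 0 (n - n / 2), f (n + 1 - l)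
      = ∑ l ∈ Finset.Ioc 0 (n / 2), f (n + 1 - l) := by
    rcases Nat.even_or_odd n with he | ho
    · obtain ⟨t, ht⟩ := he
      have : n - n / 2 = n / 2 := by omega
      rw [this]
    · obtain ⟨t, ht⟩ := ho
      have hnn : n - n / 2 = n / 2 + 1 := by omega
      rw [hnn, Finset.sum_Ioc_succ_top (Nat.zero_le _)]
      have harg : n + 1 - (n / 2 + 1) = n / 2 + 1 := by omega
      have hzero : f (n / 2 + 1) = 0 := by
        have hcast : 2 * ((n / 2 + 1 : ℕ) : ℝ) - n - 1 = 0 := by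
          have : 2 * (n / 2 + 1) = n + 1 := by omega
          have := congrArg (fun x : ℕ => (x : ℝ)) this
          push_cast at this ⊢
          linarith
        simp only [hf]
        rw [hcast]
        ring
      rw [harg, hzero, add_zero]
  rw [h3, ← Finset.sum_add_distrib]
  refine Finset.sum_congr rfl fun m hm => ?_
  simp only [Finset.mem_Ioc] at hm
  have hm1 : 1 ≤ m := hm.1
  have hm2 : 2 * m ≤ n := by omega
  have hAA : A (n + 1 - m) = A m := hA m hm1 (by omega)
  have hcast : ((n + 1 - m : ℕ) : ℝ) = (n : ℝ) + 1 - m := by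
    rw [Nat.cast_sub (by omega)]
    push_cast; ring
  simp only [hf, hAA, hcast]
  ring

private lemma coeff_succ (a : ℕ → ℕ) (m : ℕ) :
    (∑ i ∈ Finset.range (m + 1 + 1), ((i : ℝ) + 1) ^ 2 * (a (i + 1) : ℝ) * (a (m + 1 - i) : ℝ))
      - ∑ i ∈ Finset.range (m + 1),
          ((((i : ℝ) + 1) * (a (i + 1) : ℝ)) * ((((m - i : ℕ) : ℝ) + 1) * (a (m - i + 1) : ℝ)))
    = (((m + 1 + 1) ^ 2 * a (m + 1 + 1) * a 0 : ℕ) : ℝ)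
      + ∑ l ∈ Finset.Icc 1 ((m + 1) / 2),
          (((2 * (l : ℤ) - 1 - ((m + 1 : ℕ) : ℤ)) ^ 2 : ℤ) : ℝ) * (a l : ℝ)
            * (a (m + 1 - l + 1) : ℝ) := by
  set n := m + 1 with hn
  set A : ℕ → ℝ := fun l => (a l : ℝ) * (a (n + 1 - l) : ℝ) with hA_def
  have hA : ∀ m', 1 ≤ m' → m' ≤ n → A (n + 1 - m') = A m' := by
    intro m' h1 h2
    simp only [hA_def]
    have h3 : n + 1 - (n + 1 - m') = m' := by omega
    rw [h3, mul_comm]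
  have hps := pair_sum n A hA
  rw [show Finset.Icc 1 n = Finset.Ico 1 (n + 1) from by rw [Finset.Ico_add_one_right_eq_Icc],
    Finset.sum_Ico_eq_sum_range] at hps
  simp only [Nat.add_sub_cancel] at hps
  have hRHS : ∑ l ∈ Finset.Icc 1 (n / 2),
      (((2 * (l : ℤ) - 1 - ((n : ℕ) : ℤ)) ^ 2 : ℤ) : ℝ) * (a l : ℝ) * (a (n - l + 1) : ℝ)
      = ∑ l ∈ Finset.Icc 1 (n / 2), (2 * (l : ℝ) - n - 1) ^ 2 * A l := by
    refine Finset.sum_congr rfl fun l hl => ?_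
    simp only [Finset.mem_Icc] at hl
    have hl2 : n - l + 1 = n + 1 - l := by omega
    rw [hl2]
    simp only [hA_def]
    push_cast
    ring
  rw [Finset.sum_range_succ]
  have htop : ((n : ℝ) + 1) ^ 2 * (a (n + 1) : ℝ) * (a (n - n) : ℝ)
      = (((n + 1) ^ 2 * a (n + 1) * a 0 : ℕ) : ℝ) := by
    rw [Nat.sub_self]
    push_cast
    ring
  rw [htop, hRHS, ← hps]
  have hmain : ∑ i ∈ Finset.range n,
      (((i : ℝ) + 1) ^ 2 * (a (i + 1) : ℝ) * (a (n - i) : ℝ)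
        - (((i : ℝ) + 1) * (a (i + 1) : ℝ)) * ((((m - i : ℕ) : ℝ) + 1) * (a (m - i + 1) : ℝ)))
      = ∑ i ∈ Finset.range n, ((1 + i : ℕ) : ℝ) * (2 * ((1 + i : ℕ) : ℝ) - n - 1) * A (1 + i) := by
    refine Finset.sum_congr rfl fun i hi => ?_
    simp only [Finset.mem_range] at hi
    have h1 : m - i + 1 = n - i := by omega
    have h2 : n + 1 - (1 + i) = n - i := by omega
    have h3 : ((m - i : ℕ) : ℝ) = (n : ℝ) - 1 - i := by
      rw [Nat.cast_sub (by omega)]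
      simp only [hn]
      push_cast
      ring
    rw [h1]
    simp only [hA_def, h2, h3]
    push_cast
    ring
  rw [Finset.sum_sub_distrib] at hmain
  linarith


/-- The generating function ζ(z) = Σ_{k≥0} aₖ zᵏ. -/
noncomputable def tsumZeta (a : ℕ → ℕ) (z : ℝ) : ℝ := ∑' k : ℕ, (a k : ℝ) * z ^ k

/-- For ζ with nonnegative coefficients, a₀ > 0, some aₖ > 0 (k > 0):
for z ∈ (0,R),
[ζ'(z) + z ζ''(z)] ζ(z) − z ζ'(z)²
 = Σ_k ( (k+1)² a_{k+1} a₀ + Σ_{l=1}^{⌊k/2⌋} (2l−1−k)² a_l a_{k−l+1} ) zᵏ > 0. -/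
theorem typical_ee_Z_derivative_numerator (a : ℕ → ℕ) (ha0 : 0 < a 0)
    (hk : ∃ k, 0 < k ∧ 0 < a k)
    (R : ENNReal) (hR : 0 < R)
    (hconv : ∀ x : ℝ, 0 ≤ x → ENNReal.ofReal x < R →
      Summable (fun k : ℕ => (a k : ℝ) * x ^ k))
    (hdiv : ∀ x : ℝ, 0 ≤ x → R < ENNReal.ofReal x →
      ¬ Summable (fun k : ℕ => (a k : ℝ) * x ^ k)) :
    ∀ z : ℝ, 0 < z → ENNReal.ofReal z < R →
      (deriv (tsumZeta a) z + z * deriv (deriv (tsumZeta a)) z) * tsumZeta a z -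
          z * (deriv (tsumZeta a) z) ^ 2 =
        (∑' k : ℕ,
          ((((k + 1) ^ 2 * a (k + 1) * a 0 : ℕ) : ℝ) +
            ∑ l ∈ Finset.Icc 1 (k / 2),
              (((2 * (l : ℤ) - 1 - (k : ℤ)) ^ 2 : ℤ) : ℝ) * (a l : ℝ) * (a (k - l + 1) : ℝ)) *
            z ^ k) ∧
      0 < (deriv (tsumZeta a) z + z * deriv (deriv (tsumZeta a)) z) * tsumZeta a z -
            z * (deriv (tsumZeta a) z) ^ 2 := by
  intro z hz hzR
  obtain ⟨w, hw0', hzw', hwR⟩ := (ENNReal.lt_iff_exists_real_btwn).1 hzR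
  have hzw : z < w := by
    by_contra h
    push_neg at h
    exact absurd (ENNReal.ofReal_le_ofReal h) (not_le.2 hzw')
  have hw0 : 0 < w := lt_trans hz hzw
  have hzabs : |z| = z := abs_of_pos hz
  have hbase : Summable fun k : ℕ => |((a k : ℝ))| * w ^ k := by
    refine (hconv w hw0.le hwR).congr fun k => ?_
    rw [abs_of_nonneg (Nat.cast_nonneg _)]
  set d1 : ℕ → ℝ := fun k => ((k : ℝ) + 1) * (a (k + 1) : ℝ) with hd1
  set d2 : ℕ → ℝ := fun k => ((k : ℝ) + 1) * d1 (k + 1) with hd2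
  set qq : ℕ → ℝ := fun k => ((k : ℝ) + 1) ^ 2 * (a (k + 1) : ℝ) with hqq
  set w1 : ℝ := (z + w) / 2 with hw1def
  have hzw1 : z < w1 := by rw [hw1def]; linarith
  have hw1w : w1 < w := by rw [hw1def]; linarith
  have hw10 : 0 < w1 := lt_trans hz hzw1
  set w2 : ℝ := (z + w1) / 2 with hw2def
  have hzw2 : z < w2 := by rw [hw2def]; linarith
  have hw2w1 : w2 < w1 := by rw [hw2def]; linarith
  have hw20 : 0 < w2 := lt_trans hz hzw2
  have habs1 : ∀ k : ℕ, |((k : ℝ) + 1)| = (k : ℝ) + 1 := fun k =>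
    abs_of_nonneg (by positivity)
  have hd1w1 : Summable fun k : ℕ => |d1 k| * w1 ^ k := by
    refine (summable_coeff (fun k => (a k : ℝ)) hw10.le hw1w hbase).congr fun k => ?_
    simp only [hd1, abs_mul, habs1]
  have hd2w2 : Summable fun k : ℕ => |d2 k| * w2 ^ k := by
    refine (summable_coeff d1 hw20.le hw2w1 hd1w1).congr fun k => ?_
    simp only [hd2, abs_mul, habs1]
  have hfun : tsumZeta a = fun y => ∑' k : ℕ, (a k : ℝ) * y ^ k := rfl
  have hD1 : ∀ y : ℝ, |y| < w → HasDerivAt (tsumZeta a) (∑' k : ℕ, d1 k * y ^ k) y := by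
    intro y hy
    rw [hfun]
    have h := hasDerivAt_psum (fun k => (a k : ℝ)) hbase hy
    have he : (∑' k : ℕ, d1 k * y ^ k)
        = ∑' k : ℕ, (((k : ℝ) + 1) * (a (k + 1) : ℝ)) * y ^ k := by
      simp only [hd1]
    rw [he]
    exact h
  have hval : tsumZeta a z = ∑' k : ℕ, (a k : ℝ) * z ^ k := rfl
  have hder1 : deriv (tsumZeta a) z = ∑' k : ℕ, d1 k * z ^ k :=
    (hD1 z (by rw [hzabs]; exact hzw)).deriv
  have hEE : deriv (tsumZeta a) =ᶠ[𝓝 z] fun y => ∑' k : ℕ, d1 k * y ^ k := by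
    filter_upwards [Ioo_mem_nhds (by linarith : -w < z) hzw] with y hy
    exact (hD1 y (abs_lt.2 ⟨hy.1, hy.2⟩)).deriv
  have hder2 : deriv (deriv (tsumZeta a)) z = ∑' k : ℕ, d2 k * z ^ k := by
    rw [hEE.deriv_eq]
    have h := hasDerivAt_psum d1 hd1w1 (by rw [hzabs]; exact hzw1)
    rw [h.deriv]
  have hzlew : |z| ≤ w1 := by rw [hzabs]; exact hzw1.le
  have hs0 : Summable fun k : ℕ => (a k : ℝ) * z ^ k := hconv z hz.le hzR
  have hn0 : Summable fun k : ℕ => ‖(a k : ℝ) * z ^ k‖ :=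
    summable_norm_of_abs_le _ (by rw [hzabs]; exact hzw.le) hbase
  have hs1 : Summable fun k : ℕ => d1 k * z ^ k := summable_of_abs_le d1 hzlew hd1w1
  have hn1 : Summable fun k : ℕ => ‖d1 k * z ^ k‖ := summable_norm_of_abs_le d1 hzlew hd1w1
  have hs2 : Summable fun k : ℕ => d2 k * z ^ k :=
    summable_of_abs_le d2 (by rw [hzabs]; exact hzw2.le) hd2w2
  have hq1 : ∀ k : ℕ, |qq k| = ((k : ℝ) + 1) * |d1 k| := by
    intro k
    simp only [hqq, hd1, abs_mul, abs_pow, habs1]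
    all_goals ring
  have hnq : Summable fun k : ℕ => ‖qq k * z ^ k‖ := by
    refine (summable_coeff' d1 hz.le hzw1 hd1w1).congr fun k => ?_
    have hh : ‖qq k * z ^ k‖ = |qq k| * z ^ k := by
      rw [Real.norm_eq_abs, abs_mul, abs_pow, hzabs]
    rw [hh, hq1 k]
  have hsq : Summable fun k : ℕ => qq k * z ^ k := hnq.of_norm
  set PP : ℕ → ℝ := fun n => ∑ i ∈ Finset.range (n + 1), qq i * (a (n - i) : ℝ) with hPP
  set CC : ℕ → ℝ := fun n => ∑ i ∈ Finset.range (n + 1), d1 i * d1 (n - i) with hCC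
  have hzpow : ∀ i n : ℕ, i < n + 1 → z ^ i * z ^ (n - i) = z ^ n := by
    intro i n hi
    rw [← pow_add]
    congr 1
    omega
  have hterm1 : ∀ n : ℕ, ∑ i ∈ Finset.range (n + 1), qq i * z ^ i * ((a (n - i) : ℝ) * z ^ (n - i))
      = PP n * z ^ n := by
    intro n
    simp only [hPP]
    rw [Finset.sum_mul]
    refine Finset.sum_congr rfl fun i hi => ?_
    simp only [Finset.mem_range] at hi
    calc qq i * z ^ i * ((a (n - i) : ℝ) * z ^ (n - i))
        = qq i * (a (n - i) : ℝ) * (z ^ i * z ^ (n - i)) := by ring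
      _ = qq i * (a (n - i) : ℝ) * z ^ n := by rw [hzpow i n hi]
  have hterm2 : ∀ n : ℕ, ∑ i ∈ Finset.range (n + 1), d1 i * z ^ i * (d1 (n - i) * z ^ (n - i))
      = CC n * z ^ n := by
    intro n
    simp only [hCC]
    rw [Finset.sum_mul]
    refine Finset.sum_congr rfl fun i hi => ?_
    simp only [Finset.mem_range] at hi
    calc d1 i * z ^ i * (d1 (n - i) * z ^ (n - i))
        = d1 i * d1 (n - i) * (z ^ i * z ^ (n - i)) := by ring
      _ = d1 i * d1 (n - i) * z ^ n := by rw [hzpow i n hi]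
  have hprod1 : (∑' k : ℕ, qq k * z ^ k) * (∑' k : ℕ, (a k : ℝ) * z ^ k)
      = ∑' n : ℕ, PP n * z ^ n := by
    rw [tsum_mul_tsum_eq_tsum_sum_range_of_summable_norm hnq hn0]
    exact tsum_congr hterm1
  have hprod2 : (∑' k : ℕ, d1 k * z ^ k) * (∑' k : ℕ, d1 k * z ^ k)
      = ∑' n : ℕ, CC n * z ^ n := by
    rw [tsum_mul_tsum_eq_tsum_sum_range_of_summable_norm hn1 hn1]
    exact tsum_congr hterm2
  have hsumPP : Summable fun n : ℕ => PP n * z ^ n :=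
    (summable_sum_mul_range_of_summable_mul
      (summable_mul_of_summable_norm hnq hn0)).congr hterm1
  have hsumCC : Summable fun n : ℕ => CC n * z ^ n :=
    (summable_sum_mul_range_of_summable_mul
      (summable_mul_of_summable_norm hn1 hn1)).congr hterm2
  set E : ℕ → ℝ := fun n => match n with
    | 0 => 0
    | Nat.succ m => CC m * z ^ (m + 1) with hE
  have hE0 : E 0 = 0 := rfl
  have hES : ∀ m : ℕ, E (m + 1) = CC m * z ^ (m + 1) := fun m => rfl
  have hsumE : Summable E := by
    rw [← summable_nat_add_iff 1]
    refine ((hsumCC.mul_left z)).congr fun n => ?_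
    rw [hES]
    ring
  have hzCC : z * ((∑' k : ℕ, d1 k * z ^ k) * (∑' k : ℕ, d1 k * z ^ k)) = ∑' n : ℕ, E n := by
    rw [hprod2, ← tsum_mul_left]
    calc ∑' n : ℕ, z * (CC n * z ^ n) = ∑' n : ℕ, E (n + 1) :=
        tsum_congr fun n => by rw [hES]; ring
      _ = ∑' n : ℕ, E n := by rw [Summable.tsum_eq_zero_add hsumE, hE0, zero_add]
  have hstepA : (∑' k : ℕ, d1 k * z ^ k) + z * (∑' k : ℕ, d2 k * z ^ k)
      = ∑' k : ℕ, qq k * z ^ k := by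
    have hsub : Summable fun k : ℕ => (qq k - d1 k) * z ^ k := by
      refine (hsq.sub hs1).congr fun k => ?_
      ring
    have h1 : (∑' k : ℕ, qq k * z ^ k) - (∑' k : ℕ, d1 k * z ^ k)
        = ∑' k : ℕ, (qq k - d1 k) * z ^ k := by
      rw [← Summable.tsum_sub hsq hs1]
      exact tsum_congr fun k => (sub_mul _ _ _).symm
    have h2 : (∑' k : ℕ, (qq k - d1 k) * z ^ k) = z * ∑' k : ℕ, d2 k * z ^ k := by
      rw [Summable.tsum_eq_zero_add hsub]
      have hz0 : (qq 0 - d1 0) * z ^ 0 = 0 := by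
        simp only [hqq, hd1]
        norm_num
      rw [hz0, zero_add, ← tsum_mul_left]
      refine tsum_congr fun k => ?_
      have hqd : qq (k + 1) - d1 (k + 1) = d2 k := by
        simp only [hqq, hd1, hd2]
        push_cast
        ring
      rw [hqd]
      ring
    linarith
  have hcoeff : ∀ n : ℕ, PP n * z ^ n - E n
      = ((((n + 1) ^ 2 * a (n + 1) * a 0 : ℕ) : ℝ)
          + ∑ l ∈ Finset.Icc 1 (n / 2),
              (((2 * (l : ℤ) - 1 - (n : ℤ)) ^ 2 : ℤ) : ℝ) * (a l : ℝ) * (a (n - l + 1) : ℝ))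
        * z ^ n := by
    intro n
    match n with
    | 0 =>
      rw [hE0, sub_zero]
      simp only [hPP, hqq]
      rw [Finset.sum_range_one]
      rw [show Finset.Icc 1 (0 / 2) = (∅ : Finset ℕ) from rfl]
      push_cast
      norm_num
    | Nat.succ m =>
      rw [hES, ← sub_mul]
      have h := coeff_succ a m
      have hPQ : PP (m + 1) = ∑ i ∈ Finset.range (m + 1 + 1),
          ((i : ℝ) + 1) ^ 2 * (a (i + 1) : ℝ) * (a (m + 1 - i) : ℝ) := by
        simp only [hPP, hqq]
      have hCQ : CC m = ∑ i ∈ Finset.range (m + 1),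
          ((((i : ℝ) + 1) * (a (i + 1) : ℝ)) * ((((m - i : ℕ) : ℝ) + 1) * (a (m - i + 1) : ℝ))) := by
        simp only [hCC, hd1]
      rw [hPQ, hCQ, h]
  have hsumc : Summable fun n : ℕ =>
      ((((n + 1) ^ 2 * a (n + 1) * a 0 : ℕ) : ℝ)
        + ∑ l ∈ Finset.Icc 1 (n / 2),
            (((2 * (l : ℤ) - 1 - (n : ℤ)) ^ 2 : ℤ) : ℝ) * (a l : ℝ) * (a (n - l + 1) : ℝ))
      * z ^ n :=
    (hsumPP.sub hsumE).congr hcoeff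
  have hEQ : (deriv (tsumZeta a) z + z * deriv (deriv (tsumZeta a)) z) * tsumZeta a z -
      z * (deriv (tsumZeta a) z) ^ 2 =
      ∑' k : ℕ,
        ((((k + 1) ^ 2 * a (k + 1) * a 0 : ℕ) : ℝ) +
          ∑ l ∈ Finset.Icc 1 (k / 2),
            (((2 * (l : ℤ) - 1 - (k : ℤ)) ^ 2 : ℤ) : ℝ) * (a l : ℝ) * (a (k - l + 1) : ℝ)) *
          z ^ k := by
    rw [hder1, hder2, hval, hstepA, pow_two, hzCC, hprod1, ← Summable.tsum_sub hsumPP hsumE]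
    exact tsum_congr hcoeff
  refine ⟨hEQ, ?_⟩
  rw [hEQ]
  obtain ⟨K, hK0, haK⟩ := hk
  have hcnn : ∀ n : ℕ,
      (0:ℝ) ≤ ((((n + 1) ^ 2 * a (n + 1) * a 0 : ℕ) : ℝ)
        + ∑ l ∈ Finset.Icc 1 (n / 2),
            (((2 * (l : ℤ) - 1 - (n : ℤ)) ^ 2 : ℤ) : ℝ) * (a l : ℝ) * (a (n - l + 1) : ℝ))
      * z ^ n := by
    intro n
    refine mul_nonneg (add_nonneg (Nat.cast_nonneg _) (Finset.sum_nonneg fun l _ => ?_))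
      (pow_nonneg hz.le n)
    refine mul_nonneg (mul_nonneg ?_ (Nat.cast_nonneg _)) (Nat.cast_nonneg _)
    exact_mod_cast sq_nonneg (2 * (l : ℤ) - 1 - (n : ℤ))
  have hKK : K - 1 + 1 = K := by omega
  have hterm : (0:ℝ) <
      ((((K - 1 + 1) ^ 2 * a (K - 1 + 1) * a 0 : ℕ) : ℝ)
        + ∑ l ∈ Finset.Icc 1 ((K - 1) / 2),
            (((2 * (l : ℤ) - 1 - ((K - 1 : ℕ) : ℤ)) ^ 2 : ℤ) : ℝ) * (a l : ℝ)
              * (a ((K - 1) - l + 1) : ℝ))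
      * z ^ (K - 1) := by
    have h1 : (0:ℝ) < (((K - 1 + 1) ^ 2 * a (K - 1 + 1) * a 0 : ℕ) : ℝ) := by
      rw [hKK]
      have : 0 < K ^ 2 * a K * a 0 :=
        Nat.mul_pos (Nat.mul_pos (pow_pos hK0 2) haK) ha0
      exact_mod_cast this
    have h2 : (0:ℝ) ≤ ∑ l ∈ Finset.Icc 1 ((K - 1) / 2),
        (((2 * (l : ℤ) - 1 - ((K - 1 : ℕ) : ℤ)) ^ 2 : ℤ) : ℝ) * (a l : ℝ)
          * (a ((K - 1) - l + 1) : ℝ) := by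
      refine Finset.sum_nonneg fun l _ => ?_
      refine mul_nonneg (mul_nonneg ?_ (Nat.cast_nonneg _)) (Nat.cast_nonneg _)
      exact_mod_cast sq_nonneg (2 * (l : ℤ) - 1 - ((K - 1 : ℕ) : ℤ))
    have := add_pos_of_pos_of_nonneg h1 h2
    exact mul_pos this (pow_pos hz _)
  exact lt_of_lt_of_le hterm (Summable.le_tsum hsumc (K - 1) fun j _ => hcnn j)
end

section
/- With β(n) = ln ζ(z_0(n)) − n ln z_0(n) defined via the unique positive saddle point z_0(n), the function β is strictly concave on (0, n_max): β''(n) < 0 for all n ∈ (0, n_max). -/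
open Filter Topology Set

noncomputable def D1a (a : ℕ → ℕ) (x : ℝ) : ℝ := ∑' n : ℕ, (a n : ℝ) * ((n : ℝ) * x ^ (n - 1))

noncomputable def D2a (a : ℕ → ℕ) (x : ℝ) : ℝ :=
  ∑' n : ℕ, (a n : ℝ) * ((n : ℝ) * (((n - 1 : ℕ) : ℝ) * x ^ (n - 1 - 1)))

def Usad (R : ENNReal) : Set ℝ := {x | 0 < x ∧ ENNReal.ofReal x < R}

lemma Usad_open (R : ENNReal) : IsOpen (Usad R) := by
  have h1 : IsOpen {x : ℝ | 0 < x} := isOpen_lt continuous_const continuous_id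
  have h2 : IsOpen {x : ℝ | ENNReal.ofReal x < R} :=
    isOpen_lt ENNReal.continuous_ofReal continuous_const
  exact h1.inter h2

lemma Usad_mem_of_le {R : ENNReal} {x y : ℝ} (hx : x ∈ Usad R) (hy : 0 < y) (hyx : y ≤ x) :
    y ∈ Usad R :=
  ⟨hy, lt_of_le_of_lt (ENNReal.ofReal_le_ofReal hyx) hx.2⟩

lemma Usad_convex (R : ENNReal) : Convex ℝ (Usad R) := by
  apply Set.OrdConnected.convex
  constructor
  intro x hx y hy z hz
  exact ⟨lt_of_lt_of_le hx.1 hz.1, lt_of_le_of_lt (ENNReal.ofReal_le_ofReal hz.2) hy.2⟩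

lemma Usad_exists_gt {R : ENNReal} {x : ℝ} (hx : x ∈ Usad R) : ∃ r ∈ Usad R, x < r := by
  obtain ⟨ε, hε, hb⟩ := Metric.isOpen_iff.1 (Usad_open R) x hx
  refine ⟨x + ε / 2, hb ?_, by linarith⟩
  simp only [Metric.mem_ball, Real.dist_eq, add_sub_cancel_left]
  rw [abs_of_nonneg (le_of_lt (half_pos hε))]
  linarith

lemma Usad_exists_Icc {R : ENNReal} {x : ℝ} (hx : x ∈ Usad R) :
    ∃ δ > 0, Icc (x - δ) (x + δ) ⊆ Usad R := by
  obtain ⟨ε, hε, hb⟩ := Metric.isOpen_iff.1 (Usad_open R) x hx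
  refine ⟨ε / 2, half_pos hε, fun y hy => hb ?_⟩
  simp only [Metric.mem_ball, Real.dist_eq]
  rw [abs_lt]
  obtain ⟨h1, h2⟩ := hy
  constructor <;> linarith

section Summ
variable {a : ℕ → ℕ} {R : ENNReal}
variable (hconv : ∀ x : ℝ, 0 ≤ x → ENNReal.ofReal x < R →
      Summable (fun k : ℕ => (a k : ℝ) * x ^ k))
include hconv

lemma sumA (j : ℕ) {r : ℝ} (hr : r ∈ Usad R) :
    Summable (fun n : ℕ => (a n : ℝ) * (n : ℝ) ^ j * r ^ n) := by
  obtain ⟨s, hs, hrs⟩ := Usad_exists_gt hr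
  have hr0 : (0:ℝ) < r := hr.1
  have hs0 : (0:ℝ) < s := hs.1
  have hq : ‖r / s‖ < 1 := by
    rw [Real.norm_eq_abs, abs_of_nonneg (by positivity : (0:ℝ) ≤ r / s)]
    rw [div_lt_one hs0]; exact hrs
  have hsum : Summable (fun n : ℕ => (n : ℝ) ^ j * (r / s) ^ n) :=
    summable_pow_mul_geometric_of_norm_lt_one j hq
  obtain ⟨C, hC⟩ := hsum.tendsto_atTop_zero.bddAbove_range
  simp only [mem_upperBounds, Set.mem_range, forall_exists_index] at hC
  have hCb : ∀ n : ℕ, (n : ℝ) ^ j * (r / s) ^ n ≤ C := fun n => hC _ n rfl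
  have hsS : Summable (fun n : ℕ => C * ((a n : ℝ) * s ^ n)) :=
    (hconv s (le_of_lt hs0) hs.2).mul_left C
  apply Summable.of_nonneg_of_le (fun n => by positivity) _ hsS
  intro n
  have key : (a n : ℝ) * (n : ℝ) ^ j * r ^ n = ((a n : ℝ) * s ^ n) * ((n : ℝ) ^ j * (r / s) ^ n) := by
    rw [div_pow]
    field_simp
  rw [key, mul_comm C]
  exact mul_le_mul_of_nonneg_left (hCb n) (by positivity)

lemma sumS1 {x : ℝ} (hx : x ∈ Usad R) :
    Summable (fun n : ℕ => (a n : ℝ) * ((n : ℝ) * x ^ (n - 1))) := by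
  have h := (sumA hconv 1 hx).mul_right x⁻¹
  apply h.congr
  intro n
  rcases n with _ | k
  · simp
  · have hx0 : x ≠ 0 := ne_of_gt hx.1
    simp only [Nat.add_sub_cancel, pow_one, pow_succ]
    field_simp

lemma sumS2 {x : ℝ} (hx : x ∈ Usad R) :
    Summable (fun n : ℕ => (a n : ℝ) * ((n : ℝ) * (((n - 1 : ℕ) : ℝ) * x ^ (n - 1 - 1)))) := by
  have hx0 : (0:ℝ) < x := hx.1
  have h := (sumA hconv 2 hx).mul_right (x⁻¹ * x⁻¹)
  apply Summable.of_nonneg_of_le (fun n => by positivity) _ h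
  intro n
  rcases n with _ | n
  · simp
  rcases n with _ | k
  · simp
    positivity
  · simp only [Nat.add_sub_cancel]
    have hxk : (0:ℝ) ≤ x ^ k := by positivity
    have ha : (0:ℝ) ≤ (a (k+1+1) : ℝ) := by positivity
    have hx0 : x ≠ 0 := ne_of_gt hx.1
    have hred : x ^ (k+1+1) * (x⁻¹ * x⁻¹) = x ^ k := by
      rw [pow_succ, pow_succ]; field_simp
    rw [mul_assoc ((a (k+1+1):ℝ) * ((k+1+1 : ℕ):ℝ) ^ 2), hred]
    push_cast
    nlinarith [mul_nonneg ha hxk]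

end Summ

section Deriv
variable {a : ℕ → ℕ} {R : ENNReal}
variable (hconv : ∀ x : ℝ, 0 ≤ x → ENNReal.ofReal x < R →
      Summable (fun k : ℕ => (a k : ℝ) * x ^ k))
include hconv

lemma hasDerivAt_zeta {x : ℝ} (hx : x ∈ Usad R) :
    HasDerivAt (tsumZeta a) (D1a a x) x := by
  obtain ⟨r, hr, hxr⟩ := Usad_exists_gt hx
  have hr0 : (0:ℝ) < r := hr.1
  have ht : Ioo (0:ℝ) r ⊆ Usad R := fun y hy => Usad_mem_of_le hr hy.1 (le_of_lt hy.2)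
  have hu : Summable (fun n : ℕ => (a n : ℝ) * ((n : ℝ) * r ^ (n - 1))) := sumS1 hconv hr
  have key : HasDerivAt (fun z : ℝ => ∑' n : ℕ, (a n : ℝ) * z ^ n)
      (∑' n : ℕ, (a n : ℝ) * ((n : ℝ) * x ^ (n - 1))) x := by
    apply hasDerivAt_tsum_of_isPreconnected hu isOpen_Ioo
      (convex_Ioo (0:ℝ) r).isPreconnected
      (g := fun n y => (a n : ℝ) * y ^ n)
      (fun n y _ => (hasDerivAt_pow n y).const_mul (a n : ℝ))
      ?_ ⟨hx.1, hxr⟩ (hconv x (le_of_lt hx.1) hx.2) ⟨hx.1, hxr⟩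
    intro n y hy
    have hy0 : (0:ℝ) ≤ y := hy.1.le
    rw [Real.norm_eq_abs, abs_of_nonneg (mul_nonneg (Nat.cast_nonneg _)
      (mul_nonneg (Nat.cast_nonneg _) (pow_nonneg hy0 _)))]
    gcongr
    exact hy.2.le
  exact key

lemma hasDerivAt_D1 {x : ℝ} (hx : x ∈ Usad R) :
    HasDerivAt (D1a a) (D2a a x) x := by
  obtain ⟨r, hr, hxr⟩ := Usad_exists_gt hx
  have hr0 : (0:ℝ) < r := hr.1
  have hu : Summable (fun n : ℕ => (a n : ℝ) * ((n : ℝ) * (((n - 1 : ℕ) : ℝ) * r ^ (n - 1 - 1)))) :=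
    sumS2 hconv hr
  apply hasDerivAt_tsum_of_isPreconnected hu isOpen_Ioo
    (convex_Ioo (0:ℝ) r).isPreconnected
    (g := fun n y => (a n : ℝ) * ((n : ℝ) * y ^ (n - 1)))
    (fun n y _ => ((hasDerivAt_pow (n-1) y).const_mul (n:ℝ)).const_mul (a n : ℝ))
    ?_ ⟨hx.1, hxr⟩ (sumS1 hconv hx) ⟨hx.1, hxr⟩
  intro n y hy
  have hy0 : (0:ℝ) ≤ y := hy.1.le
  rw [Real.norm_eq_abs, abs_of_nonneg (mul_nonneg (Nat.cast_nonneg _) (mul_nonneg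
    (Nat.cast_nonneg _) (mul_nonneg (Nat.cast_nonneg _) (pow_nonneg hy0 _))))]
  gcongr
  exact hy.2.le

end Deriv

section Moments
variable {a : ℕ → ℕ} {R : ENNReal}
variable (hconv : ∀ x : ℝ, 0 ≤ x → ENNReal.ofReal x < R →
      Summable (fun k : ℕ => (a k : ℝ) * x ^ k))
include hconv

lemma zeta_pos (ha0 : 0 < a 0) {x : ℝ} (hx : x ∈ Usad R) : 0 < tsumZeta a x := by
  have hS : Summable (fun k : ℕ => (a k : ℝ) * x ^ k) := hconv x hx.1.le hx.2
  have h0 : (a 0 : ℝ) * x ^ 0 ≤ tsumZeta a x := by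
    apply Summable.le_tsum hS 0
    intro i _
    have := hx.1.le
    positivity
  have : (0:ℝ) < (a 0 : ℝ) * x ^ 0 := by
    simp only [pow_zero, mul_one]
    exact_mod_cast ha0
  linarith

omit hconv in
lemma m1_eq {x : ℝ} (hx : x ∈ Usad R) :
    x * D1a a x = ∑' n : ℕ, (a n : ℝ) * (n : ℝ) * x ^ n := by
  rw [D1a, ← tsum_mul_left]
  apply tsum_congr
  intro n
  rcases n with _ | k
  · simp
  · simp only [Nat.add_sub_cancel]
    rw [pow_succ]
    push_cast
    ring

lemma m2_eq {x : ℝ} (hx : x ∈ Usad R) :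
    x * D1a a x + x ^ 2 * D2a a x = ∑' n : ℕ, (a n : ℝ) * (n : ℝ) ^ 2 * x ^ n := by
  have h2 : x ^ 2 * D2a a x = ∑' n : ℕ, (a n : ℝ) * ((n:ℝ) * ((n-1:ℕ):ℝ)) * x ^ n := by
    rw [D2a, ← tsum_mul_left]
    apply tsum_congr
    intro n
    rcases n with _ | n
    · simp
    rcases n with _ | k
    · simp
    · simp only [Nat.add_sub_cancel]
      push_cast
      ring
  rw [m1_eq hx, h2]
  have hsum1 : Summable (fun n : ℕ => (a n : ℝ) * (n : ℝ) * x ^ n) := by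
    have := sumA hconv 1 hx
    apply this.congr; intro n; rw [pow_one]
  have hsum2 : Summable (fun n : ℕ => (a n : ℝ) * ((n:ℝ) * ((n-1:ℕ):ℝ)) * x ^ n) := by
    have hx0 : (0:ℝ) < x := hx.1
    apply Summable.of_nonneg_of_le _ _ (sumA hconv 2 hx)
    · intro n
      exact mul_nonneg (mul_nonneg (Nat.cast_nonneg _) (mul_nonneg (Nat.cast_nonneg _)
        (Nat.cast_nonneg _))) (pow_nonneg hx0.le _)
    · intro n
      rcases n with _ | k
      · simp
      · simp only [Nat.add_sub_cancel]
        have hxp : (0:ℝ) ≤ x ^ (k+1) := pow_nonneg hx0.le _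
        have ha : (0:ℝ) ≤ (a (k+1) : ℝ) := Nat.cast_nonneg _
        push_cast
        nlinarith [mul_nonneg ha hxp]
  rw [← Summable.tsum_add hsum1 hsum2]
  apply tsum_congr
  intro n
  rcases n with _ | k
  · simp
  · simp only [Nat.add_sub_cancel]
    push_cast
    ring

lemma var_pos (ha0 : 0 < a 0) (hk : ∃ k, 0 < k ∧ 0 < a k) {x : ℝ} (hx : x ∈ Usad R) :
    (∑' n : ℕ, (a n : ℝ) * (n : ℝ) * x ^ n) ^ 2
      < tsumZeta a x * ∑' n : ℕ, (a n : ℝ) * (n : ℝ) ^ 2 * x ^ n := by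
  obtain ⟨k0, hk0, hak0⟩ := hk
  have hx0 : (0:ℝ) < x := hx.1
  have S0 : Summable (fun n : ℕ => (a n : ℝ) * x ^ n) := hconv x hx0.le hx.2
  have S1 : Summable (fun n : ℕ => (a n : ℝ) * (n : ℝ) * x ^ n) := by
    have := sumA hconv 1 hx; apply this.congr; intro n; rw [pow_one]
  have S2 : Summable (fun n : ℕ => (a n : ℝ) * (n : ℝ) ^ 2 * x ^ n) := by
    have := sumA hconv 2 hx
    apply this.congr; intro n; ring
  set M0 := tsumZeta a x with hM0
  set M1 := ∑' n : ℕ, (a n : ℝ) * (n : ℝ) * x ^ n with hM1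
  set M2 := ∑' n : ℕ, (a n : ℝ) * (n : ℝ) ^ 2 * x ^ n with hM2
  have hM0pos : 0 < M0 := zeta_pos hconv ha0 hx
  set t := M1 / M0 with ht
  have hcomb : ∀ n : ℕ, ((n:ℝ) - t) ^ 2 * ((a n : ℝ) * x ^ n)
      = (a n : ℝ) * (n : ℝ) ^ 2 * x ^ n - (2*t) * ((a n : ℝ) * (n : ℝ) * x ^ n)
        + t^2 * ((a n : ℝ) * x ^ n) := by
    intro n; ring
  have Sh : Summable (fun n : ℕ => ((n:ℝ) - t) ^ 2 * ((a n : ℝ) * x ^ n)) := by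
    apply Summable.congr _ (fun n => (hcomb n).symm)
    exact (S2.sub (S1.mul_left (2*t))).add (S0.mul_left (t^2))
  have hval : (∑' n : ℕ, ((n:ℝ) - t) ^ 2 * ((a n : ℝ) * x ^ n))
      = M2 - 2*t*M1 + t^2*M0 := by
    calc (∑' n : ℕ, ((n:ℝ) - t) ^ 2 * ((a n : ℝ) * x ^ n))
        = ∑' n : ℕ, ((a n : ℝ) * (n : ℝ) ^ 2 * x ^ n
            - (2*t) * ((a n : ℝ) * (n : ℝ) * x ^ n) + t^2 * ((a n : ℝ) * x ^ n)) :=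
          tsum_congr hcomb
      _ = M2 - 2*t*M1 + t^2*M0 := by
          rw [Summable.tsum_add (S2.sub (S1.mul_left (2*t))) (S0.mul_left (t^2)),
            Summable.tsum_sub S2 (S1.mul_left (2*t)), tsum_mul_left, tsum_mul_left]
          simp only [hM0, hM1, hM2, tsumZeta]
  have hterm : ∀ i : ℕ, 0 ≤ ((i:ℝ) - t) ^ 2 * ((a i : ℝ) * x ^ i) := by
    intro i
    have := hx0.le
    positivity
  have hlow : ((0:ℝ) - t) ^ 2 * ((a 0 : ℝ) * x ^ 0) + ((k0:ℝ) - t) ^ 2 * ((a k0 : ℝ) * x ^ k0)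
      ≤ ∑' n : ℕ, ((n:ℝ) - t) ^ 2 * ((a n : ℝ) * x ^ n) := by
    have h01 : (0 : ℕ) ≠ k0 := by omega
    have := Summable.sum_le_tsum ({0, k0} : Finset ℕ) (fun i _ => hterm i) Sh
    rw [Finset.sum_pair h01] at this
    exact_mod_cast this
  have hb0 : (0:ℝ) < (a 0 : ℝ) * x ^ 0 := by
    have : (0:ℝ) < (a 0 : ℝ) := by exact_mod_cast ha0
    positivity
  have hbk : (0:ℝ) < (a k0 : ℝ) * x ^ k0 := by
    have : (0:ℝ) < (a k0 : ℝ) := by exact_mod_cast hak0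
    positivity
  have hpos : 0 < ∑' n : ℕ, ((n:ℝ) - t) ^ 2 * ((a n : ℝ) * x ^ n) := by
    rcases eq_or_ne t 0 with h | h
    · have hk0' : (0:ℝ) < (k0:ℝ) := by exact_mod_cast hk0
      have : 0 < ((k0:ℝ) - t) ^ 2 * ((a k0 : ℝ) * x ^ k0) := by
        rw [h, sub_zero]
        positivity
      nlinarith [mul_nonneg (sq_nonneg ((0:ℝ) - t)) hb0.le]
    · have h2 : ((0:ℝ) - t) ≠ 0 := by simpa using h
      have ht2 : 0 < ((0:ℝ) - t)^2 :=
        lt_of_le_of_ne (sq_nonneg _) (Ne.symm (pow_ne_zero 2 h2))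
      have : 0 < ((0:ℝ) - t) ^ 2 * ((a 0 : ℝ) * x ^ 0) := mul_pos ht2 hb0
      nlinarith [mul_nonneg (sq_nonneg ((k0:ℝ) - t)) hbk.le]
  have key : 0 < M2 - 2*t*M1 + t^2*M0 := hval ▸ hpos
  have htM0 : t * M0 = M1 := by
    rw [ht]; field_simp
  nlinarith [mul_pos hM0pos key, htM0, hM0pos]
end Moments

noncomputable def gSad (a : ℕ → ℕ) (x : ℝ) : ℝ := x * D1a a x / tsumZeta a x

noncomputable def GSad (a : ℕ → ℕ) (x : ℝ) : ℝ :=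
  ((1 * D1a a x + x * D2a a x) * tsumZeta a x - x * D1a a x * D1a a x) / tsumZeta a x ^ 2

section GFun
variable {a : ℕ → ℕ} {R : ENNReal}
variable (hconv : ∀ x : ℝ, 0 ≤ x → ENNReal.ofReal x < R →
      Summable (fun k : ℕ => (a k : ℝ) * x ^ k))
variable (ha0 : 0 < a 0)
include hconv ha0

lemma hasDerivAt_gSad {x : ℝ} (hx : x ∈ Usad R) :
    HasDerivAt (gSad a) (GSad a x) x := by
  have h1 : HasDerivAt (fun y : ℝ => y * D1a a y) (1 * D1a a x + x * D2a a x) x :=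
    (hasDerivAt_id x).mul (hasDerivAt_D1 hconv hx)
  have h2 := h1.div (hasDerivAt_zeta hconv hx) (ne_of_gt (zeta_pos hconv ha0 hx))
  exact h2

lemma GSad_pos (hk : ∃ k, 0 < k ∧ 0 < a k) {x : ℝ} (hx : x ∈ Usad R) : 0 < GSad a x := by
  have hx0 : (0:ℝ) < x := hx.1
  have hM0 : 0 < tsumZeta a x := zeta_pos hconv ha0 hx
  have hvar := var_pos hconv ha0 hk hx
  rw [← m1_eq hx, ← m2_eq hconv hx] at hvar
  have hnum : 0 < (1 * D1a a x + x * D2a a x) * tsumZeta a x - x * D1a a x * D1a a x := by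
    by_contra hc
    push_neg at hc
    nlinarith
  exact div_pos hnum (by positivity)

lemma gSad_strictMono (hk : ∃ k, 0 < k ∧ 0 < a k) : StrictMonoOn (gSad a) (Usad R) := by
  apply strictMonoOn_of_deriv_pos (Usad_convex R)
  · intro x hx
    exact (hasDerivAt_gSad hconv ha0 hx).continuousAt.continuousWithinAt
  · intro x hx
    rw [(Usad_open R).interior_eq] at hx
    rw [(hasDerivAt_gSad hconv ha0 hx).deriv]
    exact GSad_pos hconv ha0 hk hx

end GFun


/-- With β(n) = ln ζ(z₀(n)) − n ln z₀(n) defined via the unique positive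
saddle point z₀(n), β is strictly concave on (0, n_max): β''(n) < 0 there. -/
theorem typical_ee_beta_concave (a : ℕ → ℕ) (ha0 : 0 < a 0)
    (hk : ∃ k, 0 < k ∧ 0 < a k)
    (R : ENNReal) (hR : 0 < R)
    (hconv : ∀ x : ℝ, 0 ≤ x → ENNReal.ofReal x < R →
      Summable (fun k : ℕ => (a k : ℝ) * x ^ k))
    (hdiv : ∀ x : ℝ, 0 ≤ x → R < ENNReal.ofReal x →
      ¬ Summable (fun k : ℕ => (a k : ℝ) * x ^ k))
    (nmax : ENNReal) (hnmax : 0 < nmax)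
    (z0 : ℝ → ℝ)
    (hz0 : ∀ n : ℝ, 0 < n → ENNReal.ofReal n < nmax →
      0 < z0 n ∧ ENNReal.ofReal (z0 n) < R ∧
        z0 n * deriv (tsumZeta a) (z0 n) = n * tsumZeta a (z0 n) ∧
        (∀ w : ℝ, 0 < w → ENNReal.ofReal w < R →
          w * deriv (tsumZeta a) w = n * tsumZeta a w → w = z0 n)) :
    ∀ n : ℝ, 0 < n → ENNReal.ofReal n < nmax →
      deriv (deriv (fun m : ℝ => Real.log (tsumZeta a (z0 m)) - m * Real.log (z0 m))) n < 0 := by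
  have hmem : ∀ m ∈ Usad nmax, z0 m ∈ Usad R :=
    fun m hm => ⟨(hz0 m hm.1 hm.2).1, (hz0 m hm.1 hm.2).2.1⟩
  have heq : ∀ m ∈ Usad nmax, z0 m * D1a a (z0 m) = m * tsumZeta a (z0 m) := by
    intro m hm
    have h := (hz0 m hm.1 hm.2).2.2.1
    rwa [(hasDerivAt_zeta hconv (hmem m hm)).deriv] at h
  have hgz : ∀ m ∈ Usad nmax, gSad a (z0 m) = m := by
    intro m hm
    rw [gSad, heq m hm, mul_div_assoc,
      div_self (ne_of_gt (zeta_pos hconv ha0 (hmem m hm))), mul_one]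
  have huniq : ∀ m ∈ Usad nmax, ∀ w ∈ Usad R, gSad a w = m → w = z0 m := by
    intro m hm w hw hgw
    apply (hz0 m hm.1 hm.2).2.2.2 w hw.1 hw.2
    rw [(hasDerivAt_zeta hconv hw).deriv]
    rw [gSad, div_eq_iff (ne_of_gt (zeta_pos hconv ha0 hw))] at hgw
    linarith [hgw]
  have hcont : ∀ m ∈ Usad nmax, ContinuousAt z0 m := by
    intro m hm
    rw [ContinuousAt, Metric.tendsto_nhds]
    intro ε hε
    obtain ⟨δ0, hδ0, hIcc0⟩ := Usad_exists_Icc (hmem m hm)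
    set x := z0 m with hxdef
    set δ := min δ0 (ε/2) with hδdef
    have hδpos : 0 < δ := lt_min hδ0 (half_pos hε)
    have hδε : δ < ε := lt_of_le_of_lt (min_le_right _ _) (by linarith)
    have hIcc : Icc (x - δ) (x + δ) ⊆ Usad R := by
      intro y hy
      apply hIcc0
      have h1 := min_le_left δ0 (ε/2)
      exact ⟨by linarith [hy.1], by linarith [hy.2]⟩
    have hxl : x - δ ∈ Usad R := hIcc ⟨by linarith, by linarith⟩
    have hxr : x + δ ∈ Usad R := hIcc ⟨by linarith, by linarith⟩
    have hmono := gSad_strictMono hconv ha0 hk (R := R)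
    have hl : gSad a (x - δ) < m := by
      have := hmono hxl (hmem m hm) (by linarith)
      rwa [hgz m hm] at this
    have hr : m < gSad a (x + δ) := by
      have := hmono (hmem m hm) hxr (by linarith)
      rwa [hgz m hm] at this
    filter_upwards [Ioo_mem_nhds hl hr, (Usad_open nmax).mem_nhds hm] with m' h1 h2
    have hcg : ContinuousOn (gSad a) (Icc (x - δ) (x + δ)) :=
      fun y hy => (hasDerivAt_gSad hconv ha0 (hIcc hy)).continuousAt.continuousWithinAt
    obtain ⟨w, hw, hgw⟩ := intermediate_value_Icc (by linarith : x - δ ≤ x + δ) hcg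
      ⟨h1.1.le, h1.2.le⟩
    have hwz : w = z0 m' := huniq m' h2 w (hIcc hw) hgw
    rw [Real.dist_eq, ← hwz, abs_lt]
    constructor <;> linarith [hw.1, hw.2, hδε]
  have hz0deriv : ∀ m ∈ Usad nmax, HasDerivAt z0 (GSad a (z0 m))⁻¹ m := by
    intro m hm
    apply HasDerivAt.of_local_left_inverse (hcont m hm)
      (hasDerivAt_gSad hconv ha0 (hmem m hm))
      (ne_of_gt (GSad_pos hconv ha0 hk (hmem m hm)))
    filter_upwards [(Usad_open nmax).mem_nhds hm] with m' hm' using hgz m' hm'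
  have hbeta : ∀ m ∈ Usad nmax,
      HasDerivAt (fun m' : ℝ => Real.log (tsumZeta a (z0 m')) - m' * Real.log (z0 m'))
        (- Real.log (z0 m)) m := by
    intro m hm
    have hxU := hmem m hm
    have hx0 : 0 < z0 m := hxU.1
    have hfx : 0 < tsumZeta a (z0 m) := zeta_pos hconv ha0 hxU
    have hs := hz0deriv m hm
    set s := (GSad a (z0 m))⁻¹ with hsdef
    have h1 : HasDerivAt (fun m' => tsumZeta a (z0 m')) (D1a a (z0 m) * s) m :=
      (hasDerivAt_zeta hconv hxU).comp m hs
    have h2 : HasDerivAt (fun m' => Real.log (tsumZeta a (z0 m')))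
        ((tsumZeta a (z0 m))⁻¹ * (D1a a (z0 m) * s)) m :=
      (Real.hasDerivAt_log (ne_of_gt hfx)).comp (h := fun m' => tsumZeta a (z0 m')) m h1
    have h3 : HasDerivAt (fun m' => Real.log (z0 m')) ((z0 m)⁻¹ * s) m :=
      (Real.hasDerivAt_log (ne_of_gt hx0)).comp m hs
    have h4 : HasDerivAt (fun m' : ℝ => m' * Real.log (z0 m'))
        (1 * Real.log (z0 m) + m * ((z0 m)⁻¹ * s)) m := (hasDerivAt_id m).mul h3
    have h5 := h2.sub h4
    refine h5.congr_deriv ?_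
    have heqm := heq m hm
    have key : (tsumZeta a (z0 m))⁻¹ * (D1a a (z0 m) * s) = m * ((z0 m)⁻¹ * s) := by
      field_simp
      linear_combination s * heqm
    rw [key]
    ring
  intro n hn hnmax'
  have hnW : n ∈ Usad nmax := ⟨hn, hnmax'⟩
  have hd1 : deriv (fun m : ℝ => Real.log (tsumZeta a (z0 m)) - m * Real.log (z0 m))
      =ᶠ[𝓝 n] fun m => - Real.log (z0 m) := by
    filter_upwards [(Usad_open nmax).mem_nhds hnW] with m hm using (hbeta m hm).deriv
  rw [Filter.EventuallyEq.deriv_eq hd1]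
  have h3 : HasDerivAt (fun m' => Real.log (z0 m')) ((z0 n)⁻¹ * (GSad a (z0 n))⁻¹) n :=
    (Real.hasDerivAt_log (ne_of_gt (hmem n hnW).1)).comp n (hz0deriv n hnW)
  rw [(show HasDerivAt (fun m => -Real.log (z0 m)) (-((z0 n)⁻¹ * (GSad a (z0 n))⁻¹)) n from h3.neg).deriv]
  have hG := GSad_pos hconv ha0 hk (hmem n hnW)
  have hx0 : 0 < z0 n := (hmem n hnW).1
  have : 0 < (z0 n)⁻¹ * (GSad a (z0 n))⁻¹ := by positivity
  linarith
end

section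
/- With β(n) = ln ζ(z_0(n)) − n ln z_0(n) and ζ having a_0 > 0, we have lim_{n→0⁺} β(n) = ln a_0. If additionally ζ is a polynomial of degree n_max with leading coefficient a_{n_max} > 0, then lim_{n→n_max⁻} β(n) = ln a_{n_max}. -/
open Filter Topology Set

lemma summable_deriv_aux (a : ℕ → ℕ) {x s : ℝ} (hx : 0 ≤ x) (hxs : x < s)
    (hs : Summable (fun k : ℕ => (a k : ℝ) * s ^ k)) :
    Summable (fun k : ℕ => (k : ℝ) * a k * x ^ (k - 1)) := by
  have hs0 : 0 < s := lt_of_le_of_lt hx hxs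
  rw [← summable_nat_add_iff 1]
  have hq : ‖x / s‖ < 1 := by
    rw [Real.norm_eq_abs, abs_of_nonneg (div_nonneg hx hs0.le)]
    exact (div_lt_one hs0).2 hxs
  have hsum : Summable (fun k : ℕ => ((k : ℝ) + 1) * (x / s) ^ k) := by
    have h1 := summable_pow_mul_geometric_of_norm_lt_one 1 hq
    have h0 := summable_geometric_of_norm_lt_one hq
    simpa [pow_one, add_mul, one_mul] using h1.add h0
  set C := ∑' k : ℕ, (a k : ℝ) * s ^ k with hCdef
  have hC : ∀ k, (a k : ℝ) * s ^ k ≤ C := fun k =>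
    Summable.le_tsum hs k (fun j _ => by positivity)
  refine Summable.of_nonneg_of_le
    (fun k => by positivity) (fun k => ?_) (hsum.mul_left (C / s))
  have h1 : ((k + 1 : ℕ) : ℝ) * a (k + 1) * x ^ (k + 1 - 1) =
      ((k : ℝ) + 1) * ((a (k + 1) : ℝ) * x ^ k) := by push_cast; ring
  rw [h1]
  have h2 : (a (k + 1) : ℝ) * x ^ k ≤ (C / s) * (x / s) ^ k := by
    have h3 := hC (k + 1)
    have hxk : (0:ℝ) ≤ x ^ k := by positivity
    have he : C / s * (x / s) ^ k = C * x ^ k / s ^ (k + 1) := by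
      rw [div_pow]; field_simp; rw [pow_succ]; ring
    rw [he, le_div_iff₀ (by positivity)]
    nlinarith [mul_le_mul_of_nonneg_right h3 hxk]
  calc ((k : ℝ) + 1) * ((a (k + 1) : ℝ) * x ^ k) ≤ ((k : ℝ) + 1) * ((C / s) * (x / s) ^ k) := by
        apply mul_le_mul_of_nonneg_left h2 (by positivity)
    _ = (C / s) * (((k : ℝ) + 1) * (x / s) ^ k) := by ring

noncomputable def dzeta (a : ℕ → ℕ) (x : ℝ) : ℝ := ∑' k : ℕ, (k : ℝ) * a k * x ^ (k - 1)
noncomputable def szeta (a : ℕ → ℕ) (x : ℝ) : ℝ := ∑' k : ℕ, (k : ℝ) * a k * x ^ k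


lemma exists_between_R {R : ENNReal} {x : ℝ} (hx : 0 ≤ x) (hxR : ENNReal.ofReal x < R) :
    ∃ r : ℝ, x < r ∧ ENNReal.ofReal r < R := by
  obtain ⟨r, hr0, hxr, hrR⟩ := ENNReal.lt_iff_exists_real_btwn.1 hxR
  exact ⟨r, (ENNReal.ofReal_lt_ofReal_iff_of_nonneg hx).1 hxr, hrR⟩

lemma summable_szeta (a : ℕ → ℕ) {R : ENNReal}
    (hconv : ∀ x : ℝ, 0 ≤ x → ENNReal.ofReal x < R →
      Summable (fun k : ℕ => (a k : ℝ) * x ^ k))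
    {x : ℝ} (hx : 0 ≤ x) (hxR : ENNReal.ofReal x < R) :
    Summable (fun k : ℕ => (k : ℝ) * a k * x ^ k) := by
  obtain ⟨r, hxr, hrR⟩ := exists_between_R hx hxR
  have h := (summable_deriv_aux a hx hxr (hconv r (hx.trans hxr.le) hrR)).mul_right x
  apply h.congr
  intro k
  match k with
  | 0 => simp
  | (k+1) => simp only [Nat.add_sub_cancel]; ring

lemma mul_dzeta_eq_szeta (a : ℕ → ℕ) {x : ℝ} : x * dzeta a x = szeta a x := by
  unfold dzeta szeta
  rw [← tsum_mul_left]
  apply tsum_congr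
  intro k
  match k with
  | 0 => simp
  | (k+1) => simp only [Nat.add_sub_cancel]; ring

lemma zeta_le (a : ℕ → ℕ) {R : ENNReal}
    (hconv : ∀ x : ℝ, 0 ≤ x → ENNReal.ofReal x < R →
      Summable (fun k : ℕ => (a k : ℝ) * x ^ k))
    {x : ℝ} (hx : 0 ≤ x) (hxR : ENNReal.ofReal x < R) :
    tsumZeta a x ≤ (a 0 : ℝ) + szeta a x := by
  have h1 : Summable (fun k : ℕ => (k : ℝ) * a k * x ^ k) := summable_szeta a hconv hx hxR
  have h2 : Summable (fun k : ℕ => if k = 0 then (a 0 : ℝ) else 0) := by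
    apply summable_of_ne_finset_zero (s := {0})
    intro k hk
    simp only [Finset.mem_singleton] at hk
    simp [hk]
  have h3 : tsumZeta a x ≤ ∑' k : ℕ, ((if k = 0 then (a 0 : ℝ) else 0) + (k : ℝ) * a k * x ^ k) := by
    apply Summable.tsum_le_tsum _ (hconv x hx hxR) (h2.add h1)
    intro k
    match k with
    | 0 => simp
    | (k+1) =>
      simp only [Nat.succ_ne_zero, if_false, zero_add]
      have : (1:ℝ) ≤ ((k:ℝ)+1) := by have := Nat.cast_nonneg (α := ℝ) k; linarith
      have hnn : (0:ℝ) ≤ (a (k+1) : ℝ) * x ^ (k+1) := by positivity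
      calc (a (k+1) : ℝ) * x ^ (k+1) = 1 * ((a (k+1) : ℝ) * x ^ (k+1)) := by ring
        _ ≤ ((k:ℝ)+1) * ((a (k+1) : ℝ) * x ^ (k+1)) := by
            apply mul_le_mul_of_nonneg_right _ hnn
            push_cast; linarith
        _ = ((k+1 : ℕ) : ℝ) * a (k+1) * x ^ (k+1) := by push_cast; ring
  rw [Summable.tsum_add h2 h1, tsum_ite_eq] at h3
  exact h3

lemma le_zeta (a : ℕ → ℕ) {R : ENNReal}
    (hconv : ∀ x : ℝ, 0 ≤ x → ENNReal.ofReal x < R →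
      Summable (fun k : ℕ => (a k : ℝ) * x ^ k))
    {x : ℝ} (hx : 0 ≤ x) (hxR : ENNReal.ofReal x < R) :
    (a 0 : ℝ) ≤ tsumZeta a x := by
  have := Summable.le_tsum (hconv x hx hxR) 0 (fun j _ => by positivity)
  simpa [tsumZeta] using this

lemma term_le_szeta (a : ℕ → ℕ) {R : ENNReal}
    (hconv : ∀ x : ℝ, 0 ≤ x → ENNReal.ofReal x < R →
      Summable (fun k : ℕ => (a k : ℝ) * x ^ k))
    {x : ℝ} (hx : 0 ≤ x) (hxR : ENNReal.ofReal x < R) (k0 : ℕ) :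
    (k0 : ℝ) * a k0 * x ^ k0 ≤ szeta a x :=
  Summable.le_tsum (summable_szeta a hconv hx hxR) k0 (fun j _ => by positivity)

lemma szeta_nonneg (a : ℕ → ℕ) {R : ENNReal}
    (hconv : ∀ x : ℝ, 0 ≤ x → ENNReal.ofReal x < R →
      Summable (fun k : ℕ => (a k : ℝ) * x ^ k))
    {x : ℝ} (hx : 0 ≤ x) (hxR : ENNReal.ofReal x < R) :
    0 ≤ szeta a x :=
  tsum_nonneg (fun k => by positivity)

lemma dzeta_mono (a : ℕ → ℕ) {R : ENNReal}
    (hconv : ∀ x : ℝ, 0 ≤ x → ENNReal.ofReal x < R →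
      Summable (fun k : ℕ => (a k : ℝ) * x ^ k))
    {x ρ : ℝ} (hx : 0 ≤ x) (hxρ : x ≤ ρ) (hρR : ENNReal.ofReal ρ < R) :
    dzeta a x ≤ dzeta a ρ := by
  obtain ⟨r, hρr, hrR⟩ := exists_between_R (hx.trans hxρ) hρR
  have hsum := hconv r (le_trans (hx.trans hxρ) hρr.le) hrR
  apply Summable.tsum_le_tsum _ (summable_deriv_aux a hx (lt_of_le_of_lt hxρ hρr) hsum)
    (summable_deriv_aux a (hx.trans hxρ) hρr hsum)
  intro k
  apply mul_le_mul_of_nonneg_left (pow_le_pow_left₀ hx hxρ _) (by positivity)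

lemma term_le_dzeta (a : ℕ → ℕ) {R : ENNReal}
    (hconv : ∀ x : ℝ, 0 ≤ x → ENNReal.ofReal x < R →
      Summable (fun k : ℕ => (a k : ℝ) * x ^ k))
    {x : ℝ} (hx : 0 ≤ x) (hxR : ENNReal.ofReal x < R) (k0 : ℕ) :
    (k0 : ℝ) * a k0 * x ^ (k0 - 1) ≤ dzeta a x := by
  obtain ⟨r, hxr, hrR⟩ := exists_between_R hx hxR
  exact Summable.le_tsum (summable_deriv_aux a hx hxr (hconv r (hx.trans hxr.le) hrR)) k0
    (fun j _ => by positivity)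

lemma hasDerivAt_tsumZeta (a : ℕ → ℕ) {R : ENNReal}
    (hconv : ∀ x : ℝ, 0 ≤ x → ENNReal.ofReal x < R →
      Summable (fun k : ℕ => (a k : ℝ) * x ^ k))
    {x : ℝ} (hx : 0 < x) (hxR : ENNReal.ofReal x < R) :
    HasDerivAt (tsumZeta a) (dzeta a x) x := by
  obtain ⟨r, hr0, hxr, hrR⟩ := ENNReal.lt_iff_exists_real_btwn.1 hxR
  obtain ⟨s, hs0, hrs, hsR⟩ := ENNReal.lt_iff_exists_real_btwn.1 hrR
  have hxr' : x < r := (ENNReal.ofReal_lt_ofReal_iff_of_nonneg hx.le).1 hxr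
  have hrs' : r < s := (ENNReal.ofReal_lt_ofReal_iff_of_nonneg hr0).1 hrs
  have hsum_s : Summable (fun k : ℕ => (a k : ℝ) * s ^ k) := hconv s hs0 hsR
  have hu : Summable (fun k : ℕ => (k : ℝ) * a k * r ^ (k - 1)) :=
    summable_deriv_aux a hr0 hrs' hsum_s
  have key : HasDerivAt (fun z : ℝ => ∑' k : ℕ, (a k : ℝ) * z ^ k)
      (∑' k : ℕ, (a k : ℝ) * ((k : ℝ) * x ^ (k - 1))) x := by
    apply hasDerivAt_tsum_of_isPreconnected hu isOpen_Ioo isPreconnected_Ioo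
      (fun k y _ => (hasDerivAt_pow k y).const_mul ((a k : ℝ)))
      (fun k y hy => ?_) (Set.mem_Ioo.2 ⟨hx, hxr'⟩) (hconv x hx.le hxR)
      (Set.mem_Ioo.2 ⟨hx, hxr'⟩)
    · obtain ⟨hy0, hyr⟩ := Set.mem_Ioo.1 hy
      rw [Real.norm_eq_abs, abs_of_nonneg (by positivity)]
      calc (a k : ℝ) * ((k : ℝ) * y ^ (k - 1)) ≤ (a k : ℝ) * ((k : ℝ) * r ^ (k - 1)) := by
            apply mul_le_mul_of_nonneg_left _ (by positivity)
            exact mul_le_mul_of_nonneg_left (pow_le_pow_left₀ hy0.le hyr.le _) (by positivity)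
        _ = (k : ℝ) * a k * r ^ (k - 1) := by ring
  have : (∑' k : ℕ, (a k : ℝ) * ((k : ℝ) * x ^ (k - 1))) = dzeta a x := by
    unfold dzeta; exact tsum_congr fun k => by ring
  rw [this] at key
  exact key

lemma part1 (a : ℕ → ℕ) (ha0 : 0 < a 0)
    (hk : ∃ k, 0 < k ∧ 0 < a k)
    (R : ENNReal) (hR : 0 < R)
    (hconv : ∀ x : ℝ, 0 ≤ x → ENNReal.ofReal x < R →
      Summable (fun k : ℕ => (a k : ℝ) * x ^ k))
    (nmax : ENNReal) (hnmax : 0 < nmax)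
    (z0 : ℝ → ℝ)
    (hz0 : ∀ n : ℝ, 0 < n → ENNReal.ofReal n < nmax →
      0 < z0 n ∧ ENNReal.ofReal (z0 n) < R ∧
        z0 n * deriv (tsumZeta a) (z0 n) = n * tsumZeta a (z0 n) ∧
        (∀ w : ℝ, 0 < w → ENNReal.ofReal w < R →
          w * deriv (tsumZeta a) w = n * tsumZeta a w → w = z0 n)) :
    Filter.Tendsto (fun n : ℝ => Real.log (tsumZeta a (z0 n)) - n * Real.log (z0 n))
      (𝓝[>] (0 : ℝ)) (𝓝 (Real.log (a 0))) := by
  obtain ⟨k0, hk0pos, hak0⟩ := hk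
  have ha0R : (0:ℝ) < (a 0 : ℝ) := by exact_mod_cast ha0
  -- choose t' > 0 with t' ≤ 1/2 and ofReal t' < nmax
  obtain ⟨t, ht0, htpos, htmax⟩ := ENNReal.lt_iff_exists_real_btwn.1 hnmax
  have htpos' : 0 < t := ENNReal.ofReal_pos.1 htpos
  set t' : ℝ := min t (1/2) with ht'def
  have ht'pos : 0 < t' := lt_min htpos' (by norm_num)
  have hIoo : Ioo (0:ℝ) t' ∈ 𝓝[>] (0:ℝ) := Ioo_mem_nhdsGT_of_mem ⟨le_refl 0, ht'pos⟩
  -- basic facts for n in Ioo 0 t'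
  have key : ∀ n ∈ Ioo (0:ℝ) t', 0 < z0 n ∧ ENNReal.ofReal (z0 n) < R ∧
      szeta a (z0 n) = n * tsumZeta a (z0 n) := by
    intro n hn
    have hnmax' : ENNReal.ofReal n < nmax := by
      calc ENNReal.ofReal n < ENNReal.ofReal t := by
            rw [ENNReal.ofReal_lt_ofReal_iff_of_nonneg hn.1.le]
            exact lt_of_lt_of_le hn.2 (min_le_left _ _)
        _ < nmax := htmax
    obtain ⟨hz, hzR, heq, _⟩ := hz0 n hn.1 hnmax'
    refine ⟨hz, hzR, ?_⟩
    rw [(hasDerivAt_tsumZeta a hconv hz hzR).deriv] at heq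
    rw [← mul_dzeta_eq_szeta a]
    exact heq
  -- zeta bounds
  have bound2 : ∀ n ∈ Ioo (0:ℝ) t', tsumZeta a (z0 n) ≤ (a 0 : ℝ) / (1 - n) := by
    intro n hn
    obtain ⟨hz, hzR, heq⟩ := key n hn
    have hn2 : n < 1/2 := lt_of_lt_of_le hn.2 (min_le_right _ _)
    have h1n : 0 < 1 - n := by linarith [hn.1]
    have h := zeta_le a hconv hz.le hzR
    rw [heq] at h
    rw [le_div_iff₀ h1n]
    nlinarith [le_zeta a hconv hz.le hzR]
  have tendzeta : Filter.Tendsto (fun n => tsumZeta a (z0 n)) (𝓝[>] (0:ℝ)) (𝓝 ((a 0:ℝ))) := by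
    have hup : Filter.Tendsto (fun n : ℝ => (a 0 : ℝ) / (1 - n)) (𝓝[>] (0:ℝ)) (𝓝 ((a 0:ℝ))) := by
      have : Filter.Tendsto (fun n : ℝ => (a 0 : ℝ) / (1 - n)) (𝓝 (0:ℝ))
          (𝓝 ((a 0:ℝ) / (1 - 0))) :=
        tendsto_const_nhds.div (tendsto_const_nhds.sub tendsto_id) (by norm_num)
      simpa using this.mono_left nhdsWithin_le_nhds
    apply tendsto_of_tendsto_of_tendsto_of_le_of_le' tendsto_const_nhds hup
    · filter_upwards [hIoo] with n hn
      exact le_zeta a hconv (key n hn).1.le (key n hn).2.1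
    · filter_upwards [hIoo] with n hn
      exact bound2 n hn
  have tendlog : Filter.Tendsto (fun n => Real.log (tsumZeta a (z0 n))) (𝓝[>] (0:ℝ))
      (𝓝 (Real.log (a 0))) :=
    ((Real.continuousAt_log (ne_of_gt ha0R)).tendsto.comp tendzeta)
  -- z0 tends to 0
  have zbound : ∀ n ∈ Ioo (0:ℝ) t', z0 n ^ k0 ≤ 2 * (a 0 : ℝ) * n := by
    intro n hn
    obtain ⟨hz, hzR, heq⟩ := key n hn
    have hn2 : n < 1/2 := lt_of_lt_of_le hn.2 (min_le_right _ _)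
    have h1 : (1:ℝ) ≤ (k0:ℝ) * (a k0 : ℝ) := by
      have hka : (1:ℝ) ≤ (k0:ℝ) := by exact_mod_cast hk0pos
      have hkb : (1:ℝ) ≤ (a k0:ℝ) := by exact_mod_cast hak0
      nlinarith
    have h2 : z0 n ^ k0 ≤ (k0:ℝ) * a k0 * z0 n ^ k0 := by
      nlinarith [pow_nonneg hz.le k0]
    have h3 := term_le_szeta a hconv hz.le hzR k0
    have h4 : tsumZeta a (z0 n) ≤ 2 * (a 0 : ℝ) := by
      have hb := bound2 n hn
      have h1n : (0:ℝ) < 1 - n := by linarith [hn.1]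
      have hd : (a 0:ℝ)/(1-n) ≤ 2*(a 0:ℝ) := by rw [div_le_iff₀ h1n]; nlinarith
      linarith
    calc z0 n ^ k0 ≤ (k0:ℝ) * a k0 * z0 n ^ k0 := h2
      _ ≤ szeta a (z0 n) := h3
      _ = n * tsumZeta a (z0 n) := heq
      _ ≤ 2 * (a 0:ℝ) * n := by nlinarith [hn.1]
  have ztend : Filter.Tendsto z0 (𝓝[>] (0:ℝ)) (𝓝 0) := by
    have hu : Filter.Tendsto (fun n : ℝ => (2 * (a 0 : ℝ) * n) ^ ((k0:ℝ)⁻¹)) (𝓝[>] (0:ℝ))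
        (𝓝 0) := by
      have h1 : Filter.Tendsto (fun n : ℝ => 2 * (a 0 : ℝ) * n) (𝓝[>] (0:ℝ)) (𝓝 0) := by
        have : Filter.Tendsto (fun n : ℝ => 2 * (a 0 : ℝ) * n) (𝓝 (0:ℝ))
            (𝓝 (2 * (a 0:ℝ) * 0)) := tendsto_const_nhds.mul tendsto_id
        simpa using this.mono_left nhdsWithin_le_nhds
      have h2 : ContinuousAt (fun y : ℝ => y ^ ((k0:ℝ)⁻¹)) 0 :=
        Real.continuousAt_rpow_const 0 _ (Or.inr (by positivity))
      have := h2.tendsto.comp h1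
      simpa [Function.comp_def, Real.zero_rpow (by positivity : ((k0:ℝ)⁻¹) ≠ 0)] using this
    apply tendsto_of_tendsto_of_tendsto_of_le_of_le' tendsto_const_nhds hu
    · filter_upwards [hIoo] with n hn
      exact (key n hn).1.le
    · filter_upwards [hIoo] with n hn
      have hz := (key n hn).1
      have hle := Real.rpow_le_rpow (z := ((k0:ℝ))⁻¹) (pow_nonneg hz.le k0) (zbound n hn)
        (inv_nonneg.2 (Nat.cast_nonneg k0))
      rwa [Real.pow_rpow_inv_natCast hz.le hk0pos.ne'] at hle
  -- choose ρ
  obtain ⟨ρ₁, hρ₁0, hρ₁pos, hρ₁R⟩ := ENNReal.lt_iff_exists_real_btwn.1 hR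
  have hρ₁pos' : 0 < ρ₁ := ENNReal.ofReal_pos.1 hρ₁pos
  set ρ : ℝ := min ρ₁ (1/2) with hρdef
  have hρpos : 0 < ρ := lt_min hρ₁pos' (by norm_num)
  have hρlt1 : ρ < 1 := lt_of_le_of_lt (min_le_right _ _) (by norm_num)
  have hρR : ENNReal.ofReal ρ < R :=
    lt_of_le_of_lt (ENNReal.ofReal_le_ofReal (min_le_left _ _)) hρ₁R
  set M : ℝ := dzeta a ρ with hMdef
  have hMpos : 0 < M := by
    have := term_le_dzeta a hconv hρpos.le hρR k0
    have h0 : (0:ℝ) < (k0:ℝ) * a k0 * ρ ^ (k0 - 1) := by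
      have h1 : (0:ℝ) < (k0:ℝ) := by exact_mod_cast hk0pos
      have h2 : (0:ℝ) < (a k0:ℝ) := by exact_mod_cast hak0
      positivity
    linarith
  have evρ : ∀ᶠ n in 𝓝[>] (0:ℝ), z0 n < ρ := ztend.eventually_lt_const hρpos
  -- lower bound for z0
  have zlower : ∀ᶠ n in 𝓝[>] (0:ℝ), n * ((a 0:ℝ) / M) ≤ z0 n := by
    filter_upwards [hIoo, evρ] with n hn hnρ
    obtain ⟨hz, hzR, heq⟩ := key n hn
    have h1 : n * (a 0:ℝ) ≤ n * tsumZeta a (z0 n) :=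
      mul_le_mul_of_nonneg_left (le_zeta a hconv hz.le hzR) hn.1.le
    have h2 : szeta a (z0 n) ≤ z0 n * M := by
      rw [← mul_dzeta_eq_szeta a]
      exact mul_le_mul_of_nonneg_left (dzeta_mono a hconv hz.le hnρ.le hρR) hz.le
    rw [mul_div_assoc', div_le_iff₀ hMpos]
    nlinarith [heq, h1, h2]
  -- n * log z0 tends to 0
  have nlog : Filter.Tendsto (fun n : ℝ => n * Real.log (z0 n)) (𝓝[>] (0:ℝ)) (𝓝 0) := by
    have hub : Filter.Tendsto (fun n : ℝ => n * Real.log ρ) (𝓝[>] (0:ℝ)) (𝓝 0) := by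
      have : Filter.Tendsto (fun n : ℝ => n * Real.log ρ) (𝓝 (0:ℝ))
          (𝓝 (0 * Real.log ρ)) := tendsto_id.mul_const _
      simpa using this.mono_left nhdsWithin_le_nhds
    have hnlogn : Filter.Tendsto (fun n : ℝ => n * Real.log n) (𝓝[>] (0:ℝ)) (𝓝 0) := by
      have h := tendsto_log_mul_rpow_nhdsGT_zero (one_pos)
      simp only [Real.rpow_one] at h
      exact h.congr (fun n => mul_comm _ _)
    have hlb : Filter.Tendsto (fun n : ℝ => n * Real.log (n * ((a 0:ℝ)/M))) (𝓝[>] (0:ℝ))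
        (𝓝 0) := by
      have hc : (0:ℝ) < (a 0:ℝ)/M := div_pos ha0R hMpos
      have h2 : Filter.Tendsto (fun n : ℝ => n * Real.log ((a 0:ℝ)/M)) (𝓝[>] (0:ℝ)) (𝓝 0) := by
        have : Filter.Tendsto (fun n : ℝ => n * Real.log ((a 0:ℝ)/M)) (𝓝 (0:ℝ))
            (𝓝 (0 * Real.log ((a 0:ℝ)/M))) := tendsto_id.mul_const _
        simpa using this.mono_left nhdsWithin_le_nhds
      have hsum := hnlogn.add h2
      rw [add_zero] at hsum
      apply hsum.congr'
      filter_upwards [self_mem_nhdsWithin] with n hn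
      rw [Real.log_mul (ne_of_gt hn) (ne_of_gt hc)]
      ring
    apply tendsto_of_tendsto_of_tendsto_of_le_of_le' hlb hub
    · filter_upwards [hIoo, zlower] with n hn hzl
      have hz := (key n hn).1
      have hc : (0:ℝ) < n * ((a 0:ℝ)/M) := mul_pos hn.1 (div_pos ha0R hMpos)
      exact mul_le_mul_of_nonneg_left (Real.log_le_log hc hzl) hn.1.le
    · filter_upwards [hIoo, evρ] with n hn hnρ
      have hz := (key n hn).1
      exact mul_le_mul_of_nonneg_left (Real.log_le_log hz hnρ.le) hn.1.le
  have := tendlog.sub nlog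
  simpa using this

lemma part2 (a : ℕ → ℕ) (ha0 : 0 < a 0)
    (R : ENNReal)
    (hdiv : ∀ x : ℝ, 0 ≤ x → R < ENNReal.ofReal x →
      ¬ Summable (fun k : ℕ => (a k : ℝ) * x ^ k))
    (nmax : ENNReal)
    (z0 : ℝ → ℝ)
    (hz0 : ∀ n : ℝ, 0 < n → ENNReal.ofReal n < nmax →
      0 < z0 n ∧ ENNReal.ofReal (z0 n) < R ∧
        z0 n * deriv (tsumZeta a) (z0 n) = n * tsumZeta a (z0 n) ∧
        (∀ w : ℝ, 0 < w → ENNReal.ofReal w < R →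
          w * deriv (tsumZeta a) w = n * tsumZeta a w → w = z0 n))
    (m : ℕ) (hm : 1 ≤ m) (ham : 0 < a m) (htop : ∀ k : ℕ, m < k → a k = 0)
    (hnm : nmax = (m : ENNReal)) :
    Filter.Tendsto (fun n : ℝ => Real.log (tsumZeta a (z0 n)) - n * Real.log (z0 n))
      (𝓝[<] (m : ℝ)) (𝓝 (Real.log (a m))) := by
  have ha0R : (0:ℝ) < (a 0 : ℝ) := by exact_mod_cast ha0
  have hamR : (0:ℝ) < (a m : ℝ) := by exact_mod_cast ham
  have hm1R : (1:ℝ) ≤ (m:ℝ) := by exact_mod_cast hm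
  -- the function is a polynomial
  set P : ℝ → ℝ := fun x => ∑ k ∈ Finset.range (m+1), (a k : ℝ) * x ^ k with hPdef
  have hPeq : tsumZeta a = P := by
    funext x
    refine tsum_eq_sum (fun k hk => ?_)
    have hk' : m < k := by
      by_contra h
      exact hk (Finset.mem_range.2 (by omega))
    rw [htop k hk']; simp
  set S : ℝ → ℝ := fun x => ∑ k ∈ Finset.range (m+1), (k:ℝ) * a k * x ^ k with hSdef
  set Q : ℝ → ℝ := fun x => ∑ k ∈ Finset.range (m+1), ((m:ℝ) - k) * a k * x ^ k with hQdef
  have hPderiv : ∀ x : ℝ, HasDerivAt P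
      (∑ k ∈ Finset.range (m+1), (a k : ℝ) * ((k:ℝ) * x ^ (k-1))) x := by
    intro x
    exact HasDerivAt.fun_sum (fun k _ => (hasDerivAt_pow k x).const_mul _)
  have hxP' : ∀ x : ℝ, x * (∑ k ∈ Finset.range (m+1), (a k : ℝ) * ((k:ℝ) * x ^ (k-1))) = S x := by
    intro x
    rw [Finset.mul_sum]
    apply Finset.sum_congr rfl
    intro k _
    match k with
    | 0 => simp
    | (j+1) => simp only [Nat.add_sub_cancel]; ring
  have hQQ : ∀ x : ℝ, (m:ℝ) * P x - S x = Q x := by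
    intro x
    rw [Finset.mul_sum, ← Finset.sum_sub_distrib]
    apply Finset.sum_congr rfl
    intro k _
    ring
  -- key saddle relation
  have key : ∀ n : ℝ, 0 < n → n < (m:ℝ) → 0 < z0 n ∧ ((m:ℝ) - n) * P (z0 n) = Q (z0 n) := by
    intro n hn hnm'
    have hof : ENNReal.ofReal n < nmax := by
      rw [hnm, ← ENNReal.ofReal_natCast m]
      exact (ENNReal.ofReal_lt_ofReal_iff_of_nonneg hn.le).2 hnm'
    obtain ⟨hz, _, heq, _⟩ := hz0 n hn hof
    refine ⟨hz, ?_⟩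
    rw [hPeq] at heq
    rw [(hPderiv (z0 n)).deriv, hxP'] at heq
    rw [← hQQ]
    rw [heq]
    ring
  -- polynomial bounds
  have hPlb : ∀ x : ℝ, 0 ≤ x → (a 0 : ℝ) ≤ P x := by
    intro x hx
    have := Finset.single_le_sum (f := fun k => (a k : ℝ) * x ^ k)
      (fun k _ => by positivity) (Finset.mem_range.2 (Nat.succ_pos m))
    simpa using this
  have hPpos : ∀ x : ℝ, 0 ≤ x → 0 < P x := fun x hx => lt_of_lt_of_le ha0R (hPlb x hx)
  have hPm : ∀ x : ℝ, 0 ≤ x → (a m : ℝ) * x ^ m ≤ P x := by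
    intro x hx
    exact Finset.single_le_sum (f := fun k => (a k : ℝ) * x ^ k)
      (fun k _ => by positivity) (Finset.mem_range.2 (Nat.lt_succ_self m))
  have hQlb : ∀ x : ℝ, 0 ≤ x → (m:ℝ) * a 0 ≤ Q x := by
    intro x hx
    have := Finset.single_le_sum (f := fun k => ((m:ℝ) - k) * a k * x ^ k)
      (fun k hk => by
        have hk' : (k:ℝ) ≤ (m:ℝ) := by
          exact_mod_cast Nat.lt_succ_iff.1 (Finset.mem_range.1 hk)
        have : (0:ℝ) ≤ (m:ℝ) - k := by linarith
        positivity) (Finset.mem_range.2 (Nat.succ_pos m))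
    simpa using this
  have hPmono : ∀ x B : ℝ, 0 ≤ x → x ≤ B → P x ≤ P B := by
    intro x B hx hxB
    apply Finset.sum_le_sum
    intro k _
    exact mul_le_mul_of_nonneg_left (pow_le_pow_left₀ hx hxB k) (by positivity)
  set C : ℝ := ∑ k ∈ Finset.range (m+1), ((m:ℝ) - k) * a k with hCdef
  have hQub : ∀ x : ℝ, 1 ≤ x → Q x ≤ C * x ^ (m-1) := by
    intro x hx
    rw [hCdef, Finset.sum_mul]
    apply Finset.sum_le_sum
    intro k hk
    rcases eq_or_lt_of_le (Nat.lt_succ_iff.1 (Finset.mem_range.1 hk)) with h | h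
    · simp [h]
    · have hk' : k ≤ m - 1 := Nat.le_sub_one_of_lt h
      have hkm : (k:ℝ) ≤ (m:ℝ) := by exact_mod_cast Nat.le_of_lt h
      have : x ^ k ≤ x ^ (m-1) := pow_le_pow_right₀ hx hk'
      have hcoef : (0:ℝ) ≤ ((m:ℝ) - k) * a k := by
        have : (0:ℝ) ≤ (m:ℝ) - k := by linarith
        positivity
      calc ((m:ℝ) - k) * a k * x ^ k ≤ ((m:ℝ) - k) * a k * x ^ (m-1) :=
            mul_le_mul_of_nonneg_left (pow_le_pow_right₀ hx hk') hcoef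
        _ = ((m:ℝ) - k) * a k * x ^ (m-1) := rfl
  have hCpos : (0:ℝ) < C := by
    have := Finset.single_le_sum (f := fun k => ((m:ℝ) - k) * (a k : ℝ))
      (fun k hk => by
        have hk' : (k:ℝ) ≤ (m:ℝ) := by
          exact_mod_cast Nat.lt_succ_iff.1 (Finset.mem_range.1 hk)
        have : (0:ℝ) ≤ (m:ℝ) - k := by linarith
        positivity) (Finset.mem_range.2 (Nat.succ_pos m))
    simp only [Nat.cast_zero, sub_zero, pow_zero, mul_one] at this
    rw [hCdef]
    nlinarith
  -- Step A : z0 tends to infinity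
  have ztop : Filter.Tendsto z0 (𝓝[<] (m:ℝ)) atTop := by
    rw [tendsto_atTop]
    intro B
    set B' : ℝ := max B 1 with hB'def
    have hB'0 : (0:ℝ) ≤ B' := le_trans zero_le_one (le_max_right _ _)
    set δ : ℝ := (m:ℝ) * a 0 / P B' with hδdef
    have hδpos : 0 < δ := div_pos (by positivity) (hPpos B' hB'0)
    set lo : ℝ := max ((m:ℝ) - δ) ((m:ℝ) - 1) with hlodef
    have hlo : lo < (m:ℝ) := max_lt (by linarith) (by linarith)
    have hIoo : Ioo lo (m:ℝ) ∈ 𝓝[<] (m:ℝ) := Ioo_mem_nhdsLT_of_mem ⟨hlo, le_refl _⟩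
    filter_upwards [hIoo] with n hn
    have hn0 : 0 < n := by
      have : (m:ℝ) - 1 ≤ lo := le_max_right _ _
      have := hn.1
      linarith
    obtain ⟨hz, heq⟩ := key n hn0 hn.2
    by_contra hB
    push_neg at hB
    have hzB' : z0 n ≤ B' := le_trans hB.le (le_max_left _ _)
    have h1 : (m:ℝ) * a 0 ≤ ((m:ℝ) - n) * P (z0 n) := by
      rw [heq]; exact hQlb _ hz.le
    have h2 : P (z0 n) ≤ P B' := hPmono _ _ hz.le hzB'
    have hmn : 0 < (m:ℝ) - n := by linarith [hn.2]
    have h3 : (m:ℝ) * a 0 ≤ ((m:ℝ) - n) * P B' := by nlinarith [hPpos _ hz.le]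
    have h4 : δ ≤ (m:ℝ) - n := by
      rw [hδdef, div_le_iff₀ (hPpos B' hB'0)]
      linarith
    have h5 : (m:ℝ) - δ ≤ lo := le_max_left _ _
    linarith [hn.1]
  -- Step B
  have hev1 : ∀ᶠ n in 𝓝[<] (m:ℝ), 1 ≤ z0 n := ztop.eventually (eventually_ge_atTop 1)
  have hIoo2 : Ioo ((m:ℝ) - 1) (m:ℝ) ∈ 𝓝[<] (m:ℝ) :=
    Ioo_mem_nhdsLT_of_mem ⟨by linarith, le_refl _⟩
  have tendB : Filter.Tendsto (fun n : ℝ => ((m:ℝ) - n) * Real.log (z0 n)) (𝓝[<] (m:ℝ))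
      (𝓝 0) := by
    have hub : Filter.Tendsto (fun n : ℝ => (C / (a m : ℝ)) * (Real.log (z0 n) / z0 n))
        (𝓝[<] (m:ℝ)) (𝓝 0) := by
      have h1 : Filter.Tendsto (fun x : ℝ => Real.log x / x) atTop (𝓝 0) := by
        have := Real.isLittleO_log_id_atTop.tendsto_div_nhds_zero
        simpa using this
      have := (h1.comp ztop).const_mul (C / (a m : ℝ))
      simpa using this
    apply tendsto_of_tendsto_of_tendsto_of_le_of_le' tendsto_const_nhds hub
    · filter_upwards [hev1, hIoo2] with n h1 hn
      have hlog : 0 ≤ Real.log (z0 n) := Real.log_nonneg h1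
      have hmn : 0 ≤ (m:ℝ) - n := by linarith [hn.2]
      positivity
    · filter_upwards [hev1, hIoo2] with n h1 hn
      have hn0 : 0 < n := by linarith [hn.1]
      obtain ⟨hz, heq⟩ := key n hn0 hn.2
      have hmn : 0 < (m:ℝ) - n := by linarith [hn.2]
      have hlog : 0 ≤ Real.log (z0 n) := Real.log_nonneg h1
      -- (m-n) * a_m * z^m ≤ C * z^(m-1)
      have hb1 : ((m:ℝ) - n) * ((a m:ℝ) * z0 n ^ m) ≤ C * z0 n ^ (m-1) := by
        calc ((m:ℝ) - n) * ((a m:ℝ) * z0 n ^ m) ≤ ((m:ℝ) - n) * P (z0 n) :=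
              mul_le_mul_of_nonneg_left (hPm _ hz.le) hmn.le
          _ = Q (z0 n) := heq
          _ ≤ C * z0 n ^ (m-1) := hQub _ h1
      have hzm : z0 n ^ m = z0 n ^ (m-1) * z0 n := by
        conv_lhs => rw [← Nat.succ_pred_eq_of_pos hm, pow_succ]
        rfl
      have hzpow : (0:ℝ) < z0 n ^ (m-1) := pow_pos hz _
      have hmn_le : ((m:ℝ) - n) ≤ (C / (a m:ℝ)) / z0 n := by
        rw [div_div, le_div_iff₀ (by positivity)]
        apply le_of_mul_le_mul_right _ hzpow
        have goal' : ((m:ℝ)-n) * ((a m:ℝ) * z0 n) * z0 n ^ (m-1)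
            = ((m:ℝ)-n) * ((a m:ℝ) * z0 n ^ m) := by rw [hzm]; ring
        rw [goal']
        exact hb1
      calc ((m:ℝ) - n) * Real.log (z0 n) ≤ ((C / (a m:ℝ)) / z0 n) * Real.log (z0 n) :=
            mul_le_mul_of_nonneg_right hmn_le hlog
        _ = (C / (a m:ℝ)) * (Real.log (z0 n) / z0 n) := by ring
  -- Step C
  have h1 : Filter.Tendsto (fun z : ℝ => P z / ((a m:ℝ) * z ^ m)) atTop (𝓝 1) := by
    have heq' : ∀ᶠ z : ℝ in atTop, ∑ k ∈ Finset.range (m+1),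
        ((a k:ℝ) / (a m:ℝ)) * (z ^ k / z ^ m) = P z / ((a m:ℝ) * z ^ m) := by
      filter_upwards [eventually_gt_atTop (0:ℝ)] with z hz
      rw [hPdef]
      simp only
      rw [Finset.sum_div]
      apply Finset.sum_congr rfl
      intro k _
      rw [mul_div_mul_comm]
    have t1 : Filter.Tendsto (fun z : ℝ => ∑ k ∈ Finset.range m,
        ((a k:ℝ) / (a m:ℝ)) * (z ^ k / z ^ m)) atTop (𝓝 0) := by
      have := tendsto_finset_sum (Finset.range m) (fun k hk =>
        (tendsto_pow_div_pow_atTop_zero (Finset.mem_range.1 hk)).const_mul ((a k:ℝ)/(a m:ℝ)))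
      simpa using this
    have t2 : Filter.Tendsto (fun z : ℝ => ((a m:ℝ) / (a m:ℝ)) * (z ^ m / z ^ m)) atTop
        (𝓝 1) := by
      apply Filter.Tendsto.congr' _ (tendsto_const_nhds (α := ℝ))
      filter_upwards [eventually_gt_atTop (0:ℝ)] with z hz
      rw [div_self (pow_pos hz m).ne', div_self hamR.ne', mul_one]
    have hsum : Filter.Tendsto (fun z : ℝ => ∑ k ∈ Finset.range (m+1),
        ((a k:ℝ) / (a m:ℝ)) * (z ^ k / z ^ m)) atTop (𝓝 1) := by
      have := t1.add t2
      rw [zero_add] at this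
      exact this.congr (fun z => (Finset.sum_range_succ _ m).symm)
    exact hsum.congr' heq'
  have h2 := h1.comp ztop
  have h3 : Filter.Tendsto (fun n : ℝ => Real.log (P (z0 n) / ((a m:ℝ) * z0 n ^ m)))
      (𝓝[<] (m:ℝ)) (𝓝 0) := by
    have := (Real.continuousAt_log one_ne_zero).tendsto.comp h2
    simpa [Function.comp_def] using this
  have tendC : Filter.Tendsto
      (fun n : ℝ => Real.log (P (z0 n)) - ((m:ℝ) * Real.log (z0 n) + Real.log (a m)))
      (𝓝[<] (m:ℝ)) (𝓝 0) := by
    apply h3.congr'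
    filter_upwards [hev1] with n h1n
    have hz : (0:ℝ) < z0 n := lt_of_lt_of_le one_pos h1n
    rw [Real.log_div (hPpos _ hz.le).ne' (by positivity),
      Real.log_mul hamR.ne' (pow_pos hz m).ne', Real.log_pow]
    ring
  have final := (tendC.add tendB).add_const (Real.log (a m))
  simp only [hPeq]
  have hval : ((0:ℝ) + 0) + Real.log (a m) = Real.log (a m) := by ring
  rw [hval] at final
  apply final.congr
  intro n
  ring

/-- With β(n) = ln ζ(z₀(n)) − n ln z₀(n) and a₀ > 0, one has
lim_{n→0⁺} β(n) = ln a₀; if additionally ζ is a polynomial of degree n_max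
(with a_{n_max} > 0), then lim_{n→n_max⁻} β(n) = ln a_{n_max}. -/
theorem typical_ee_beta_boundary (a : ℕ → ℕ) (ha0 : 0 < a 0)
    (hk : ∃ k, 0 < k ∧ 0 < a k)
    (R : ENNReal) (hR : 0 < R)
    (hconv : ∀ x : ℝ, 0 ≤ x → ENNReal.ofReal x < R →
      Summable (fun k : ℕ => (a k : ℝ) * x ^ k))
    (hdiv : ∀ x : ℝ, 0 ≤ x → R < ENNReal.ofReal x →
      ¬ Summable (fun k : ℕ => (a k : ℝ) * x ^ k))
    (nmax : ENNReal) (hnmax : 0 < nmax)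
    (z0 : ℝ → ℝ)
    (hz0 : ∀ n : ℝ, 0 < n → ENNReal.ofReal n < nmax →
      0 < z0 n ∧ ENNReal.ofReal (z0 n) < R ∧
        z0 n * deriv (tsumZeta a) (z0 n) = n * tsumZeta a (z0 n) ∧
        (∀ w : ℝ, 0 < w → ENNReal.ofReal w < R →
          w * deriv (tsumZeta a) w = n * tsumZeta a w → w = z0 n)) :
    Tendsto (fun n : ℝ => Real.log (tsumZeta a (z0 n)) - n * Real.log (z0 n))
      (𝓝[>] (0 : ℝ)) (𝓝 (Real.log (a 0))) ∧
    (∀ m : ℕ, 1 ≤ m → 0 < a m → (∀ k : ℕ, m < k → a k = 0) → nmax = (m : ENNReal) →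
      Tendsto (fun n : ℝ => Real.log (tsumZeta a (z0 n)) - n * Real.log (z0 n))
        (𝓝[<] (m : ℝ)) (𝓝 (Real.log (a m)))) := by
  constructor
  · exact part1 a ha0 hk R hR hconv nmax hnmax z0 hz0
  · intro m hm ham htop hnm
    exact part2 a ha0 R hdiv nmax z0 hz0 m hm ham htop hnm
end

section
/- For ζ_tot(z) = (1+z)/(1−z) (mixture of spinless fermions and bosons), the unique positive saddle point is z_0(n) = (√(1+n²) − 1)/n for n > 0, and β(n) = arcsinh(n) − n ln((√(1+n²) − 1)/n). -/
open Filter Topology Set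

lemma zeta_deriv (w : ℝ) (hw : w ≠ 1) :
    deriv (fun z : ℝ => (1 + z) / (1 - z)) w = 2 / (1 - w) ^ 2 := by
  have h1 : HasDerivAt (fun z : ℝ => 1 + z) 1 w := by
    simpa using (hasDerivAt_id w).const_add 1
  have h2 : HasDerivAt (fun z : ℝ => 1 - z) (-1) w := by
    simpa using (hasDerivAt_id w).const_sub 1
  have hne : 1 - w ≠ 0 := sub_ne_zero.mpr (Ne.symm hw)
  have := (h1.div h2 hne).deriv
  rw [show (fun z : ℝ => (1 + z) / (1 - z)) = (fun z => 1 + z) / (fun z => 1 - z) from rfl, this]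
  field_simp
  ring

/-- For ζ(z) = (1+z)/(1−z) (mixture of spinless fermions and bosons):
the unique positive saddle point is z₀(n) = (√(1+n²) − 1)/n for n > 0, and
β(n) = ln ζ(z₀(n)) − n ln z₀(n) = arcsinh(n) − n ln((√(1+n²) − 1)/n). -/
theorem typical_ee_fermion_boson_mixture :
    ∀ n : ℝ, 0 < n →
      (Real.sqrt (1 + n ^ 2) - 1) / n ∈ Set.Ioo (0 : ℝ) 1 ∧
      (Real.sqrt (1 + n ^ 2) - 1) / n *
          deriv (fun z : ℝ => (1 + z) / (1 - z)) ((Real.sqrt (1 + n ^ 2) - 1) / n) =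
        n * ((1 + (Real.sqrt (1 + n ^ 2) - 1) / n) / (1 - (Real.sqrt (1 + n ^ 2) - 1) / n)) ∧
      (∀ w : ℝ, w ∈ Set.Ioo (0 : ℝ) 1 →
        w * deriv (fun z : ℝ => (1 + z) / (1 - z)) w = n * ((1 + w) / (1 - w)) →
          w = (Real.sqrt (1 + n ^ 2) - 1) / n) ∧
      Real.log ((1 + (Real.sqrt (1 + n ^ 2) - 1) / n) / (1 - (Real.sqrt (1 + n ^ 2) - 1) / n)) -
          n * Real.log ((Real.sqrt (1 + n ^ 2) - 1) / n) =
        Real.arsinh n - n * Real.log ((Real.sqrt (1 + n ^ 2) - 1) / n) := by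
  intro n hn
  set s := Real.sqrt (1 + n ^ 2) with hs
  have hn2 : (0:ℝ) < 1 + n ^ 2 := by positivity
  have hs2 : s ^ 2 = 1 + n ^ 2 := Real.sq_sqrt hn2.le
  have hs0 : 0 < s := Real.sqrt_pos.mpr hn2
  have hs1 : 1 < s := by
    nlinarith [hs2, hn]
  have hslt : s < 1 + n := by
    nlinarith [hs2, hs0, hn]
  set z := (s - 1) / n with hz
  have hz0 : 0 < z := div_pos (by linarith) hn
  have hz1 : z < 1 := (div_lt_one hn).mpr (by linarith)
  have hzne : z ≠ 1 := ne_of_lt hz1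
  have h1z : (0:ℝ) < 1 - z := by linarith
  -- quadratic identity: n z^2 + 2 z - n = 0
  have hquad : n * z ^ 2 + 2 * z - n = 0 := by
    have : z = (s - 1) / n := rfl
    rw [this]
    field_simp [this, hn.ne']
    nlinarith [hs2]
  refine ⟨⟨hz0, hz1⟩, ?_, ?_, ?_⟩
  · rw [zeta_deriv z hzne]
    field_simp
    nlinarith [hquad]
  · intro w hw heq
    rw [zeta_deriv w (ne_of_lt hw.2)] at heq
    have hw1 : (0:ℝ) < 1 - w := by linarith [hw.2]
    have hq : n * w ^ 2 + 2 * w - n = 0 := by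
      field_simp at heq
      nlinarith [heq]
    have hsq : (n * w + 1) ^ 2 = s ^ 2 := by nlinarith [hq, hs2]
    have hpos : 0 < n * w + 1 := by nlinarith [hw.1, hn]
    have : n * w + 1 = s := by nlinarith [hsq, hs0, hpos]
    rw [hz]
    field_simp
    linarith [this]
  · have hratio : (1 + z) / (1 - z) = n + s := by
      have key : 1 + z = (n + s) * (1 - z) := by
        rw [hz]; field_simp
        linear_combination hs2
      rw [div_eq_iff h1z.ne', key]
    rw [hratio, Real.arsinh, ← hs]
end
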